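/- arXiv:2305.17239 — 4 statements merged into one kernel-verified Lean document; each statement's English description precedes it below -/
import Mathlib

section
/- Let P = (P_1, P_2, P_3) be a partition of T into three simply connected districts, let i ∈ {1,2,3}, and let v ∈ P_i. If the i-neighborhood of v is connected and has at most 5 elements, then P_i \ {v} is simply connected. -/
namespace Redistrict

/-!
Common definitions: the triangular lattice `G_Δ`, the triangular region `T` of side
length `n`, simply connected sets, partitions into three simply connected districts,
recombination moves, the state space `Ω` and the graph `G_Ω`.
-/

/-- The infinite triangular lattice graph `G_Δ` on `ℤ²`: two vertices are adjacent iff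
their difference is one of `(1,0),(-1,0),(0,1),(0,-1),(1,-1),(-1,1)`. -/
def TriLattice : SimpleGraph (ℤ × ℤ) :=
  SimpleGraph.fromRel (fun v w => v - w = (1, 0) ∨ v - w = (0, 1) ∨ v - w = (1, -1))

/-- The triangular region `T` of side length `n`, oriented with a vertical right edge:
column `x` (for `1 ≤ x ≤ n`) consists of the `x` vertices `(x, y)` with `1 - x ≤ y ≤ 0`.
It has `n (n+1) / 2` vertices, `n` on each side. -/
def Tset (n : ℕ) : Set (ℤ × ℤ) :=
  {p | 1 ≤ p.1 ∧ p.1 ≤ (n : ℤ) ∧ 1 - p.1 ≤ p.2 ∧ p.2 ≤ 0}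

/-- The neighborhood `N(v)` of a vertex of the triangular lattice. -/
def nbhd (v : ℤ × ℤ) : Set (ℤ × ℤ) := {w | TriLattice.Adj v w}

/-- The boundary `bd(T)`: vertices of `T` adjacent to some vertex outside `T`. -/
def bdT (n : ℕ) : Set (ℤ × ℤ) :=
  {v ∈ Tset n | ∃ w, TriLattice.Adj v w ∧ w ∉ Tset n}

/-- A corner of `T`: a vertex of `T` with exactly two neighbors in `T`. -/
def IsCorner (n : ℕ) (v : ℤ × ℤ) : Prop :=
  v ∈ Tset n ∧ (nbhd v ∩ Tset n).ncard = 2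

/-- The subgraph of `G_Δ` induced on `S` is connected. -/
def ConnSet (S : Set (ℤ × ℤ)) : Prop := (TriLattice.induce S).Connected

/-- A set of vertices is simply connected if it induces a connected subgraph of `G_Δ`
and its complement induces a connected subgraph of `G_Δ`. -/
def SimplyConn (S : Set (ℤ × ℤ)) : Prop := ConnSet S ∧ ConnSet Sᶜ

/-- A partition of `T` (of side length `n`) into three simply connected districts
`P 0`, `P 1`, `P 2` (the paper's `P_1, P_2, P_3`). -/
structure TriPartition (n : ℕ) where
  P : Fin 3 → Set (ℤ × ℤ)
  disj : ∀ i j : Fin 3, i ≠ j → Disjoint (P i) (P j)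
  cover : (⋃ i, P i) = Tset n
  sc : ∀ i, SimplyConn (P i)

/-- A recombination move: the two partitions differ, and some district of one is
identical to some district of the other. -/
def RecombMove {n : ℕ} (σ τ : TriPartition n) : Prop :=
  σ ≠ τ ∧ ∃ i j : Fin 3, σ.P i = τ.P j

/-- A partition is balanced (w.r.t. ideal sizes `k`) if `|P_i| = k_i` for each `i`. -/
def IsBalanced {n : ℕ} (k : Fin 3 → ℕ) (σ : TriPartition n) : Prop :=
  ∀ i, (σ.P i).ncard = k i

/-- `k_i - 1 ≤ |P_i| ≤ k_i + 1` for each `i`, i.e. balanced or nearly balanced. -/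
def InOmega {n : ℕ} (k : Fin 3 → ℕ) (σ : TriPartition n) : Prop :=
  ∀ i, k i ≤ (σ.P i).ncard + 1 ∧ (σ.P i).ncard ≤ k i + 1

/-- A partition is nearly balanced if it is not balanced but
`k_i - 1 ≤ |P_i| ≤ k_i + 1` for each `i`. -/
def NearlyBalanced {n : ℕ} (k : Fin 3 → ℕ) (σ : TriPartition n) : Prop :=
  ¬ IsBalanced k σ ∧ InOmega k σ

lemma IsBalanced.inOmega {n : ℕ} {k : Fin 3 → ℕ} {σ : TriPartition n}
    (h : IsBalanced k σ) : InOmega k σ := fun i => by have := h i; omega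

/-- The state space `Ω` of all balanced and nearly balanced partitions. -/
abbrev Omega (n : ℕ) (k : Fin 3 → ℕ) : Type := {σ : TriPartition n // InOmega k σ}

/-- The graph `G_Ω` on `Ω` whose edges are the recombination moves. -/
def GOmega (n : ℕ) (k : Fin 3 → ℕ) : SimpleGraph (Omega n k) where
  Adj σ τ := RecombMove σ.val τ.val
  symm := by
    constructor
    intro σ τ h
    obtain ⟨hne, i, j, hij⟩ := h
    exact ⟨Ne.symm hne, j, i, hij.symm⟩
  loopless := by
    constructor
    intro σ h
    obtain ⟨hne, -⟩ := h
    exact hne rfl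

/-- The columns of `T`: `colEq n i` is the `i`-th column `C_i` (vertices with first
coordinate `i`), and `colLT`, `colLE`, `colGT` are `C_{<i}`, `C_{≤i}`, `C_{>i}`. -/
def colEq (n i : ℕ) : Set (ℤ × ℤ) := {p ∈ Tset n | p.1 = (i : ℤ)}

def colLT (n i : ℕ) : Set (ℤ × ℤ) := {p ∈ Tset n | p.1 < (i : ℤ)}

def colLE (n i : ℕ) : Set (ℤ × ℤ) := {p ∈ Tset n | p.1 ≤ (i : ℤ)}

def colGT (n i : ℕ) : Set (ℤ × ℤ) := {p ∈ Tset n | (i : ℤ) < p.1}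

/-- The single leftmost vertex `C_1` of `T`. -/
def c1 : ℤ × ℤ := (1, 0)

/-- A vertex of `P_i` is exposed if it is adjacent to a vertex of `T` in another district. -/
def Exposed {n : ℕ} (σ : TriPartition n) (i : Fin 3) (v : ℤ × ℤ) : Prop :=
  v ∈ σ.P i ∧ ∃ w ∈ Tset n, TriLattice.Adj v w ∧ w ∉ σ.P i

/-- `S` is a connected component of `A`: a nonempty maximal connected subset of `A`. -/
def IsCompOf (S A : Set (ℤ × ℤ)) : Prop :=
  S.Nonempty ∧ S ⊆ A ∧ ConnSet S ∧ ∀ S', S ⊆ S' → S' ⊆ A → ConnSet S' → S' = S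

/-- Reassigning the vertex `v` to district `j` (removing it from the other districts)
yields again a partition of `T` into three simply connected districts. -/
def FlipTo {n : ℕ} (σ : TriPartition n) (v : ℤ × ℤ) (j : Fin 3) : Prop :=
  ∃ τ : TriPartition n, τ.P j = σ.P j ∪ {v} ∧ ∀ l, l ≠ j → τ.P l = σ.P l \ {v}

/-- `τ` is obtained from `σ` by reassigning the single vertex `v` to a new district. -/
def FlipMove {n : ℕ} (σ τ : TriPartition n) (v : ℤ × ℤ) : Prop :=
  ∃ j : Fin 3, v ∉ σ.P j ∧ τ.P j = σ.P j ∪ {v} ∧ ∀ l, l ≠ j → τ.P l = σ.P l \ {v}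

/-- A subset `S` of `P_i` is shrinkable if it contains a vertex that can be removed
from `P_i` and added to a different district, producing a valid partition. -/
def Shrinkable {n : ℕ} (σ : TriPartition n) (i : Fin 3) (S : Set (ℤ × ℤ)) : Prop :=
  ∃ x ∈ S, ∃ j : Fin 3, j ≠ i ∧ FlipTo σ x j

/-- The six unit directions of the triangular lattice. -/
def triDir (d : ℤ × ℤ) : Prop :=
  d = (1, 0) ∨ d = (-1, 0) ∨ d = (0, 1) ∨ d = (0, -1) ∨ d = (1, -1) ∨ d = (-1, 1)

/-- The `l`-th vertex (1-indexed) on the lattice line through `base` with direction `dir`. -/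
def towerVtx (base dir : ℤ × ℤ) (l : ℕ) : ℤ × ℤ := base + ((l : ℤ) - 1) • dir

/-- A tower for the partition `σ`: a sequence `v_1, …, v_t` (`t ≥ 2`) of consecutive
vertices on a straight lattice line such that `v_1` is in the same district as both common
neighbors of `v_1` and `v_2`; no two consecutive tower vertices are in the same district;
for `2 ≤ l ≤ t`, moving `v_l` to the district of `v_{l-1}` does not yield a valid
partition; and the next vertex `v_{t+1}` on the line cannot be appended to the tower. -/
structure Tower (n : ℕ) (σ : TriPartition n) where
  t : ℕ
  base : ℤ × ℤ
  dir : ℤ × ℤ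
  dst : ℕ → Fin 3
  two_le : 2 ≤ t
  dir_mem : triDir dir
  mem : ∀ l, 1 ≤ l → l ≤ t → towerVtx base dir l ∈ σ.P (dst l)
  top : ∀ u, TriLattice.Adj u (towerVtx base dir 1) →
      TriLattice.Adj u (towerVtx base dir 2) → u ∈ σ.P (dst 1)
  alt : ∀ l, 1 ≤ l → l < t → dst l ≠ dst (l + 1)
  stuck : ∀ l, 2 ≤ l → l ≤ t → ¬ FlipTo σ (towerVtx base dir l) (dst (l - 1))
  maximal : ¬ ∃ c : Fin 3, towerVtx base dir (t + 1) ∈ σ.P c ∧ c ≠ dst t ∧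
      ¬ FlipTo σ (towerVtx base dir (t + 1)) (dst t)

/-- A parametrization of the boundary cycle of `T` (of side length `n`), of period
`3(n-1)`: it runs along the top edge, then the right vertical edge, then the hypotenuse. -/
def bdCycleFun (n : ℕ) (t : ℤ) : ℤ × ℤ :=
  let m : ℤ := 3 * ((n : ℤ) - 1)
  let s : ℤ := t % m
  if s < (n : ℤ) - 1 then (1 + s, 0)
  else if s < 2 * ((n : ℤ) - 1) then ((n : ℤ), ((n : ℤ) - 1) - s)
  else (3 * ((n : ℤ) - 1) + 1 - s, 1 - (3 * ((n : ℤ) - 1) + 1 - s))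

/-- A vertex is enclosed by (the vertex set of) a cycle `C` if it is not on `C` and the set
of vertices reachable from it in the lattice avoiding `C` is finite, i.e. it lies in the
bounded region of the plane determined by `C`. -/
def Enclosed (C : Set (ℤ × ℤ)) (u : ℤ × ℤ) : Prop :=
  ∃ hu : u ∈ Cᶜ,
    {w : ℤ × ℤ | ∃ hw : w ∈ Cᶜ, (TriLattice.induce Cᶜ).Reachable ⟨u, hu⟩ ⟨w, hw⟩}.Finite

/-- `N_C(y)`: the neighbors of `y` lying on or inside the cycle with vertex set `C`. -/
def cycNbhd (C : Set (ℤ × ℤ)) (y : ℤ × ℤ) : Set (ℤ × ℤ) :=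
  {w | TriLattice.Adj y w ∧ (w ∈ C ∨ Enclosed C w)}

/-- A triangular face: three mutually adjacent vertices. -/
def TriFace (a b c : ℤ × ℤ) : Prop :=
  TriLattice.Adj a b ∧ TriLattice.Adj b c ∧ TriLattice.Adj a c

/-- Twice the signed area of the triangle `a b c`; its sign gives the orientation
(clockwise vs. counterclockwise) of the triple in the planar embedding. -/
def detOr (a b c : ℤ × ℤ) : ℤ :=
  (b.1 - a.1) * (c.2 - a.2) - (b.2 - a.2) * (c.1 - a.1)

lemma reach_mono {S T : Set (ℤ × ℤ)} (h : S ⊆ T) {a b : ℤ × ℤ} (ha : a ∈ S) (hb : b ∈ S)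
    (hr : (TriLattice.induce S).Reachable ⟨a, ha⟩ ⟨b, hb⟩) :
    (TriLattice.induce T).Reachable ⟨a, h ha⟩ ⟨b, h hb⟩ :=
  hr.map (SimpleGraph.induceHomOfLE _ h).toHom

lemma conn_remove (S : Set (ℤ × ℤ)) (v : ℤ × ℤ)
    (hS : ConnSet S) (hN : ConnSet (nbhd v ∩ S)) : ConnSet (S \ {v}) := by
  have hNsub : nbhd v ∩ S ⊆ S \ {v} := by
    rintro w ⟨hw1, hw2⟩
    exact ⟨hw2, fun h => (show TriLattice.Adj v w from hw1).ne' h⟩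
  obtain ⟨⟨w0, hw0⟩⟩ := hN.nonempty
  have hw0S : w0 ∈ S := hw0.2
  have key : ∀ (b a : ↑S) (p : (TriLattice.induce S).Walk a b)
      (hb : b.1 ∈ nbhd v ∩ S) (ha : a.1 ≠ v),
      (TriLattice.induce (S \ {v})).Reachable ⟨a.1, ⟨a.2, ha⟩⟩ ⟨b.1, hNsub hb⟩ := by
    intro b a p
    induction p with
    | nil => intro hb ha; exact SimpleGraph.Reachable.refl _
    | @cons a u b h q ih =>
      intro hb ha
      by_cases hu : u.1 = v
      · have hadj : TriLattice.Adj v a.1 := by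
          have : TriLattice.Adj a.1 u.1 := h
          rw [hu] at this
          exact this.symm
        have haN : a.1 ∈ nbhd v ∩ S := ⟨hadj, a.2⟩
        exact reach_mono hNsub haN hb (hN.preconnected ⟨a.1, haN⟩ ⟨b.1, hb⟩)
      · have h' : (TriLattice.induce (S \ {v})).Adj ⟨a.1, ⟨a.2, ha⟩⟩ ⟨u.1, ⟨u.2, hu⟩⟩ := h
        exact h'.reachable.trans (ih hb hu)
  have : Nonempty ↑(S \ {v}) := ⟨⟨w0, hNsub hw0⟩⟩
  refine SimpleGraph.Connected.mk ?_
  rintro ⟨x, hx⟩ ⟨y, hy⟩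
  have hx' : x ≠ v := hx.2
  have hy' : y ≠ v := hy.2
  obtain ⟨px⟩ := hS.preconnected ⟨x, hx.1⟩ ⟨w0, hw0S⟩
  obtain ⟨py⟩ := hS.preconnected ⟨y, hy.1⟩ ⟨w0, hw0S⟩
  exact (key ⟨w0, hw0S⟩ ⟨x, hx.1⟩ px hw0 hx').trans (key ⟨w0, hw0S⟩ ⟨y, hy.1⟩ py hw0 hy').symm

lemma conn_compl_add (S : Set (ℤ × ℤ)) (v : ℤ × ℤ)
    (hS : ConnSet Sᶜ) (w : ℤ × ℤ) (hw : TriLattice.Adj v w) (hwS : w ∉ S) :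
    ConnSet ((S \ {v})ᶜ) := by
  have hset : (S \ {v})ᶜ = Sᶜ ∪ {v} := by
    ext z; simp [Set.mem_diff]; tauto
  rw [hset]
  have hsub : Sᶜ ⊆ Sᶜ ∪ {v} := Set.subset_union_left
  have hwv : w ∈ Sᶜ ∪ {v} := hsub hwS
  have hvmem : v ∈ Sᶜ ∪ {v} := Or.inr rfl
  have reachw : ∀ (x : ℤ × ℤ) (hx : x ∈ Sᶜ ∪ {v}),
      (TriLattice.induce (Sᶜ ∪ {v})).Reachable ⟨x, hx⟩ ⟨w, hwv⟩ := by
    intro x hx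
    rcases hx with hx | hx
    · exact reach_mono hsub hx hwS (hS.preconnected ⟨x, hx⟩ ⟨w, hwS⟩)
    · have h' : (TriLattice.induce (Sᶜ ∪ {v})).Adj ⟨x, Or.inr hx⟩ ⟨w, hwv⟩ := by
        have : x = v := hx
        subst this
        exact hw
      exact h'.reachable
  have : Nonempty ↑(Sᶜ ∪ {v}) := ⟨⟨w, hwv⟩⟩
  refine SimpleGraph.Connected.mk ?_
  rintro ⟨x, hx⟩ ⟨y, hy⟩
  exact (reachw x hx).trans (reachw y hy).symm


lemma nbhd_eq' (v : ℤ × ℤ) :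
    nbhd v = {v + (1, 0), v + (-1, 0), v + (0, 1), v + (0, -1), v + (1, -1), v + (-1, 1)} := by
  ext ⟨x, y⟩
  simp only [nbhd, TriLattice, SimpleGraph.fromRel_adj, Set.mem_setOf_eq, Set.mem_insert_iff,
    Set.mem_singleton_iff, Prod.ext_iff, Prod.mk_sub_mk, Prod.mk_add_mk, ne_eq, Prod.mk.injEq,
    Prod.fst_add, Prod.snd_add, Prod.fst_sub, Prod.snd_sub]
  omega

lemma ncard_nbhd (v : ℤ × ℤ) : (nbhd v).ncard = 6 := by
  have : nbhd v = ↑((({(1, 0), (-1, 0), (0, 1), (0, -1), (1, -1), (-1, 1)} : Finset (ℤ × ℤ))).image (v + ·)) := by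
    rw [nbhd_eq']
    ext w
    simp [eq_comm]
  rw [this, Set.ncard_coe_finset, Finset.card_image_of_injective _ (add_right_injective v)]
  decide

/-- Lemma 3.3: if `v ∈ P_i` has a connected `i`-neighborhood of size at most `5`, then
`P_i \ {v}` is simply connected. -/
theorem remove_vertex_simplyConnected (n : ℕ) (σ : TriPartition n) (i : Fin 3)
    (v : ℤ × ℤ) (hv : v ∈ σ.P i)
    (hconn : ConnSet (nbhd v ∩ σ.P i))
    (hcard : (nbhd v ∩ σ.P i).ncard ≤ 5) :
    SimplyConn (σ.P i \ {v}) := by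
  have hne : ∃ w, TriLattice.Adj v w ∧ w ∉ σ.P i := by
    by_contra h
    push_neg at h
    have hsub : nbhd v ⊆ σ.P i := fun w hw => h w hw
    have heq : nbhd v ∩ σ.P i = nbhd v := Set.inter_eq_self_of_subset_left hsub
    rw [heq, ncard_nbhd] at hcard
    omega
  obtain ⟨w, hw, hwS⟩ := hne
  exact ⟨conn_remove _ v (σ.sc i).1 hconn, conn_compl_add _ v (σ.sc i).2 w hw hwS⟩

end Redistrict
end

section
/- (Flip Lemma) Let P be a partition of T into three simply connected districts, let v ∈ P_i, and let j ≠ i be such that v is adjacent to some vertex of P_j. If both the i-neighborhood and the j-neighborhood of v are connected, then the triple obtained from P by removing v from P_i and adding it to P_j is again a partition of T into three simply connected districts. -/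
namespace Redistrict

/-! ### Auxiliary machinery for the Flip Lemma -/

def rel' (S : Set (ℤ × ℤ)) (a b : ℤ × ℤ) : Prop :=
  a ∈ S ∧ b ∈ S ∧ TriLattice.Adj a b

def reaches (S : Set (ℤ × ℤ)) (x y : ℤ × ℤ) : Prop :=
  Relation.ReflTransGen (rel' S) x y

lemma rel'_symm (S : Set (ℤ × ℤ)) : Symmetric (rel' S) :=
  fun _ _ ⟨ha, hb, h⟩ => ⟨hb, ha, h.symm⟩

lemma reaches_symm {S : Set (ℤ × ℤ)} {x y : ℤ × ℤ} (h : reaches S x y) : reaches S y x :=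
  haveI : Std.Symm (rel' S) := ⟨fun _ _ hab => rel'_symm S hab⟩
  (Relation.ReflTransGen.symmetric (r := rel' S)).symm _ _ h

lemma reaches_mono {S T : Set (ℤ × ℤ)} (hST : S ⊆ T) {x y : ℤ × ℤ} (h : reaches S x y) :
    reaches T x y :=
  Relation.ReflTransGen.mono (fun _ _ ⟨ha, hb, hadj⟩ => ⟨hST ha, hST hb, hadj⟩) _ _ h

lemma walk_reaches {S : Set (ℤ × ℤ)} : ∀ {a b : S}, (TriLattice.induce S).Walk a b →
    reaches S a.val b.val := by
  intro a b w
  induction w with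
  | nil => exact .refl
  | @cons a b c hab _ ih => exact .head ⟨a.2, b.2, by simpa using hab⟩ ih

lemma reaches_reachable {S : Set (ℤ × ℤ)} {x y : ℤ × ℤ} (h : reaches S x y) (hx : x ∈ S) :
    ∀ hy : y ∈ S, (TriLattice.induce S).Reachable ⟨x, hx⟩ ⟨y, hy⟩ := by
  induction h with
  | refl => intro _; exact SimpleGraph.Reachable.refl _
  | tail _ hr ih =>
    obtain ⟨hb, hc, hadj⟩ := hr
    intro hy
    exact (ih hb).trans (SimpleGraph.Adj.reachable (by simpa using hadj))

lemma connSet_iff {S : Set (ℤ × ℤ)} :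
    ConnSet S ↔ S.Nonempty ∧ ∀ x ∈ S, ∀ y ∈ S, reaches S x y := by
  constructor
  · intro h
    refine ⟨Set.nonempty_coe_sort.mp h.nonempty, fun x hx y hy => ?_⟩
    exact (h.preconnected ⟨x, hx⟩ ⟨y, hy⟩).elim fun w => walk_reaches w
  · rintro ⟨⟨x0, hx0⟩, h⟩
    have : Nonempty ↥S := ⟨⟨x0, hx0⟩⟩
    exact ⟨fun a b => reaches_reachable (h a.val a.2 b.val b.2) a.2 b.2⟩

lemma not_mem_nbhd_self (v : ℤ × ℤ) : v ∉ nbhd v := fun h => (TriLattice.loopless.irrefl v) h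

lemma nbhd_ne {v w : ℤ × ℤ} (h : w ∈ nbhd v) : w ≠ v := fun e => not_mem_nbhd_self v (e ▸ h)

/-- Adding a vertex adjacent to a connected set keeps it connected. -/
lemma connSet_union_singleton {S : Set (ℤ × ℤ)} {v w : ℤ × ℤ} (hS : ConnSet S) (hw : w ∈ S)
    (hadj : TriLattice.Adj v w) : ConnSet (S ∪ {v}) := by
  rw [connSet_iff] at hS ⊢
  obtain ⟨-, hr⟩ := hS
  have hw' : w ∈ S ∪ {v} := Or.inl hw
  have hv' : v ∈ S ∪ {v} := Or.inr rfl
  have key : ∀ x ∈ S ∪ {v}, reaches (S ∪ {v}) w x := by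
    rintro x (hx | hx)
    · exact reaches_mono Set.subset_union_left (hr w hw x hx)
    · rw [Set.mem_singleton_iff] at hx
      subst hx
      exact Relation.ReflTransGen.single ⟨hw', hv', hadj.symm⟩
  exact ⟨⟨w, hw'⟩, fun x hx y hy => (reaches_symm (key x hx)).trans (key y hy)⟩

/-- Removing a vertex whose neighborhood within the set is connected keeps it connected. -/
lemma connSet_diff_singleton {S : Set (ℤ × ℤ)} {v : ℤ × ℤ} (hS : ConnSet S) (hv : v ∈ S)
    (hn : ConnSet (nbhd v ∩ S)) : ConnSet (S \ {v}) := by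
  rw [connSet_iff] at hS hn ⊢
  obtain ⟨hne, hr⟩ := hS
  obtain ⟨⟨z0, hz0⟩, hrn⟩ := hn
  have hsub : nbhd v ∩ S ⊆ S \ {v} := fun w ⟨h1, h2⟩ => ⟨h2, nbhd_ne h1⟩
  refine ⟨⟨z0, hsub hz0⟩, fun x hx y hy => ?_⟩
  have main : ∀ y, reaches S x y → (y ≠ v → reaches (S \ {v}) x y) ∧
      (y = v → ∃ z ∈ nbhd v ∩ S, reaches (S \ {v}) x z) := by
    intro y hy
    induction hy with
    | refl =>
      exact ⟨fun _ => .refl, fun e => absurd e hx.2⟩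
    | @tail b c _ hr2 ih =>
      obtain ⟨hbS, hcS, hadj⟩ := hr2
      by_cases hbv : b = v
      · subst hbv
        constructor
        · intro hcv
          obtain ⟨z, hz, hxz⟩ := ih.2 rfl
          have hcn : c ∈ nbhd b ∩ S := ⟨hadj, hcS⟩
          exact hxz.trans (reaches_mono hsub (hrn z hz c hcn))
        · intro e; exact absurd (e ▸ hadj) (TriLattice.loopless.irrefl _)
      · constructor
        · intro hcv
          exact (ih.1 hbv).tail ⟨⟨hbS, hbv⟩, ⟨hcS, hcv⟩, hadj⟩
        · intro e
          exact ⟨b, ⟨e ▸ hadj.symm, hbS⟩, ih.1 hbv⟩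
  exact (main y (hr x hx.1 y hy.1)).1 hy.2

/-! ### The six neighbors of a vertex form a 6-cycle -/

def dirs : Fin 6 → ℤ × ℤ := ![(1,0),(0,1),(-1,1),(-1,0),(0,-1),(1,-1)]

def adjC (k l : Fin 6) : Prop := l = k + 1 ∨ k = l + 1

instance adjC.dec : DecidableRel adjC := fun k l => by unfold adjC; infer_instance

def stepF (A R : Finset (Fin 6)) : Finset (Fin 6) :=
  R ∪ A.filter (fun k => k + 1 ∈ R ∨ k + 5 ∈ R)

def reachF (A : Finset (Fin 6)) (x : Fin 6) : Finset (Fin 6) := (stepF A)^[6] {x}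

def connF (A : Finset (Fin 6)) : Prop := ∀ x ∈ A, ∀ y ∈ A, y ∈ reachF A x

instance connF.dec (A : Finset (Fin 6)) : Decidable (connF A) := by unfold connF; infer_instance

lemma key_decide : ∀ A : Finset (Fin 6), A.Nonempty → Aᶜ.Nonempty → connF A → connF Aᶜ := by
  decide

lemma fixpoint_decide : ∀ (A : Finset (Fin 6)) (x : Fin 6), stepF A (reachF A x) = reachF A x := by
  decide

lemma adj_dirs (v : ℤ × ℤ) (k l : Fin 6) :
    TriLattice.Adj (v + dirs k) (v + dirs l) ↔ adjC k l := by
  have h : ∀ k l : Fin 6, (dirs k ≠ dirs l ∧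
      ((dirs k - dirs l = (1,0) ∨ dirs k - dirs l = (0,1) ∨ dirs k - dirs l = (1,-1)) ∨
       (dirs l - dirs k = (1,0) ∨ dirs l - dirs k = (0,1) ∨ dirs l - dirs k = (1,-1)))) ↔
      adjC k l := by decide
  rw [TriLattice, SimpleGraph.fromRel_adj, ← h k l]
  constructor
  · rintro ⟨hne, hd⟩
    refine ⟨fun e => hne (by rw [e]), ?_⟩
    simpa [add_sub_add_left_eq_sub] using hd
  · rintro ⟨hne, hd⟩
    refine ⟨fun e => hne (add_left_cancel e), ?_⟩
    simpa [add_sub_add_left_eq_sub] using hd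

lemma adj_add_dir (v d : ℤ × ℤ)
    (h : d = (1,0) ∨ d = (0,1) ∨ d = (1,-1) ∨ d = (-1,0) ∨ d = (0,-1) ∨ d = (-1,1)) :
    TriLattice.Adj v (v + d) := by
  rw [TriLattice, SimpleGraph.fromRel_adj]
  constructor
  · intro e
    rw [Prod.ext_iff] at e
    simp only [Prod.fst_add, Prod.snd_add] at e
    rcases h with rfl|rfl|rfl|rfl|rfl|rfl <;> simp at e <;> omega
  · rw [sub_add_cancel_left, add_sub_cancel_left]
    rcases h with rfl|rfl|rfl|rfl|rfl|rfl <;> simp [Prod.ext_iff] <;> decide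

lemma mem_nbhd_iff {v w : ℤ × ℤ} : w ∈ nbhd v ↔ ∃ k : Fin 6, w = v + dirs k := by
  constructor
  · intro h
    have h' : v ≠ w ∧ ((v - w = (1,0) ∨ v - w = (0,1) ∨ v - w = (1,-1)) ∨
        (w - v = (1,0) ∨ w - v = (0,1) ∨ w - v = (1,-1))) := by
      have := h
      rwa [nbhd, Set.mem_setOf_eq, TriLattice, SimpleGraph.fromRel_adj] at this
    obtain ⟨hne, (h1|h1|h1)|(h1|h1|h1)⟩ := h'
    on_goal 1 => refine ⟨3, ?_⟩; rw [show dirs 3 = (-1,0) from rfl]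
    on_goal 2 => refine ⟨4, ?_⟩; rw [show dirs 4 = (0,-1) from rfl]
    on_goal 3 => refine ⟨2, ?_⟩; rw [show dirs 2 = (-1,1) from rfl]
    on_goal 4 => refine ⟨0, ?_⟩; rw [show dirs 0 = (1,0) from rfl]
    on_goal 5 => refine ⟨1, ?_⟩; rw [show dirs 1 = (0,1) from rfl]
    on_goal 6 => refine ⟨5, ?_⟩; rw [show dirs 5 = (1,-1) from rfl]
    all_goals (
      rw [Prod.ext_iff] at h1 ⊢
      simp only [Prod.fst_sub, Prod.snd_sub, Prod.fst_add, Prod.snd_add] at h1 ⊢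
      try simp at h1
      try simp
      omega)
  · rintro ⟨k, rfl⟩
    exact adj_add_dir v (dirs k) (by fin_cases k <;> decide)

lemma dirs_inj : Function.Injective dirs := by decide

def relF (A : Finset (Fin 6)) (k l : Fin 6) : Prop := k ∈ A ∧ l ∈ A ∧ adjC k l

lemma reachF_sound {A : Finset (Fin 6)} {x : Fin 6} (hx : x ∈ A) :
    ∀ y ∈ reachF A x, y ∈ A ∧ Relation.ReflTransGen (relF A) x y := by
  suffices h : ∀ m (R : Finset (Fin 6)),
      (∀ r ∈ R, r ∈ A ∧ Relation.ReflTransGen (relF A) x r) →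
      ∀ r ∈ (stepF A)^[m] R, r ∈ A ∧ Relation.ReflTransGen (relF A) x r by
    intro y hy
    refine h 6 {x} ?_ y hy
    intro r hr
    rw [Finset.mem_singleton] at hr
    subst hr
    exact ⟨hx, .refl⟩
  intro m
  induction m with
  | zero => intro R hR; exact hR
  | succ m ih =>
    intro R hR r hr
    rw [Function.iterate_succ_apply'] at hr
    have hR' := ih R hR
    rcases Finset.mem_union.mp hr with h | h
    · exact hR' r h
    · rw [Finset.mem_filter] at h
      obtain ⟨hrA, h1 | h1⟩ := h
      · obtain ⟨hA1, hrtg⟩ := hR' _ h1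
        exact ⟨hrA, hrtg.tail ⟨hA1, hrA, Or.inr rfl⟩⟩
      · obtain ⟨hA1, hrtg⟩ := hR' _ h1
        exact ⟨hrA, hrtg.tail ⟨hA1, hrA,
          Or.inl ((by decide : ∀ r : Fin 6, r = r + 5 + 1) r)⟩⟩

lemma mem_reachF_self (A : Finset (Fin 6)) (x : Fin 6) : x ∈ reachF A x := by
  suffices h : ∀ m, x ∈ (stepF A)^[m] ({x} : Finset (Fin 6)) from h 6
  intro m
  induction m with
  | zero => simp
  | succ m ih =>
    rw [Function.iterate_succ_apply']
    exact Finset.mem_union_left _ ih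

lemma reachF_complete {A : Finset (Fin 6)} {x y : Fin 6}
    (h : Relation.ReflTransGen (relF A) x y) : y ∈ reachF A x := by
  induction h with
  | refl => exact mem_reachF_self A x
  | tail _ hr ih =>
    rename_i b c _
    obtain ⟨hbA, hcA, hadj⟩ := hr
    rw [← fixpoint_decide A x]
    refine Finset.mem_union_right _ (Finset.mem_filter.mpr ⟨hcA, ?_⟩)
    rcases hadj with h1 | h1
    · refine Or.inr ?_
      have hcb : c + 5 = b := by rw [h1]; exact (by decide : ∀ b : Fin 6, b + 1 + 5 = b) b
      exact hcb ▸ ih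
    · exact Or.inl (h1 ▸ ih)

/-- The key cyclic fact: if the part of `N(v)` inside `P` is connected and the part outside
`P` is nonempty, then the part outside `P` is connected. -/
lemma nbhd_inter_compl_conn (v : ℤ × ℤ) (P : Set (ℤ × ℤ))
    (h1 : ConnSet (nbhd v ∩ P)) (h2 : (nbhd v ∩ Pᶜ).Nonempty) :
    ConnSet (nbhd v ∩ Pᶜ) := by
  classical
  set A : Finset (Fin 6) := Finset.univ.filter (fun k => v + dirs k ∈ P) with hA
  have memA : ∀ k, k ∈ A ↔ v + dirs k ∈ P := by intro k; simp [hA]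
  have memAc : ∀ k, k ∈ Aᶜ ↔ v + dirs k ∈ Pᶜ := by
    intro k; rw [Finset.mem_compl, memA]; rfl
  rw [connSet_iff] at h1
  obtain ⟨⟨w0, hw0⟩, hr1⟩ := h1
  have hconnA : connF A := by
    intro a ha b hb
    have hma : v + dirs a ∈ nbhd v ∩ P := ⟨mem_nbhd_iff.mpr ⟨a, rfl⟩, (memA a).mp ha⟩
    have hmb : v + dirs b ∈ nbhd v ∩ P := ⟨mem_nbhd_iff.mpr ⟨b, rfl⟩, (memA b).mp hb⟩
    have hra : reaches (nbhd v ∩ P) (v + dirs a) (v + dirs b) := hr1 _ hma _ hmb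
    have key : ∀ y, reaches (nbhd v ∩ P) (v + dirs a) y →
        ∃ l, y = v + dirs l ∧ Relation.ReflTransGen (relF A) a l := by
      intro y hy
      induction hy with
      | refl => exact ⟨a, rfl, .refl⟩
      | tail _ hr ih =>
        obtain ⟨l, rfl, hrtg⟩ := ih
        obtain ⟨⟨_, hbP⟩, ⟨hcn, hcP⟩, hadj⟩ := hr
        obtain ⟨m, rfl⟩ := mem_nbhd_iff.mp hcn
        exact ⟨m, rfl, hrtg.tail ⟨(memA l).mpr hbP, (memA m).mpr hcP,
          (adj_dirs v l m).mp hadj⟩⟩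
    obtain ⟨l, he, hrtg⟩ := key _ hra
    have hlb : l = b := dirs_inj (add_left_cancel he.symm)
    exact reachF_complete (hlb ▸ hrtg)
  have hAne : A.Nonempty := by
    obtain ⟨k, hk⟩ := mem_nbhd_iff.mp hw0.1
    exact ⟨k, (memA k).mpr (hk ▸ hw0.2)⟩
  have hAcne : Aᶜ.Nonempty := by
    obtain ⟨u, hu⟩ := h2
    obtain ⟨k, hk⟩ := mem_nbhd_iff.mp hu.1
    exact ⟨k, (memAc k).mpr (hk ▸ hu.2)⟩
  have hconnAc : connF Aᶜ := key_decide A hAne hAcne hconnA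
  rw [connSet_iff]
  refine ⟨h2, fun x hx y hy => ?_⟩
  obtain ⟨k, rfl⟩ := mem_nbhd_iff.mp hx.1
  obtain ⟨l, rfl⟩ := mem_nbhd_iff.mp hy.1
  have hk : k ∈ Aᶜ := (memAc k).mpr hx.2
  have hl : l ∈ Aᶜ := (memAc l).mpr hy.2
  obtain ⟨-, hrtg⟩ := reachF_sound hk _ (hconnAc k hk l hl)
  exact Relation.ReflTransGen.lift (fun k => v + dirs k)
    (fun a b hab => ⟨⟨mem_nbhd_iff.mpr ⟨a, rfl⟩, (memAc a).mp hab.1⟩,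
      ⟨mem_nbhd_iff.mpr ⟨b, rfl⟩, (memAc b).mp hab.2.1⟩, (adj_dirs v a b).mpr hab.2.2⟩) _ _ hrtg

/-- **Flip Lemma** (Lemma 3.7): if `v ∈ P_i` is adjacent to a vertex of `P_j` (`j ≠ i`)
and both the `i`-neighborhood and the `j`-neighborhood of `v` are connected, then removing
`v` from `P_i` and adding it to `P_j` yields again a partition of `T` into three simply
connected districts. -/
theorem flip_lemma (n : ℕ) (σ : TriPartition n) (i j : Fin 3) (v : ℤ × ℤ)
    (hv : v ∈ σ.P i) (hij : j ≠ i)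
    (hadj : ∃ w ∈ σ.P j, TriLattice.Adj v w)
    (hci : ConnSet (nbhd v ∩ σ.P i)) (hcj : ConnSet (nbhd v ∩ σ.P j)) :
    FlipTo σ v j := by
  classical
  obtain ⟨w, hwj, hvw⟩ := hadj
  have hvnj : v ∉ σ.P j := fun h => Set.disjoint_left.mp (σ.disj j i hij) h hv
  have hine : (nbhd v ∩ σ.P i).Nonempty := (connSet_iff.mp hci).1
  have hjcne : (nbhd v ∩ (σ.P j)ᶜ).Nonempty := by
    obtain ⟨u, hu1, hu2⟩ := hine
    exact ⟨u, hu1, fun h => Set.disjoint_left.mp (σ.disj j i hij) h hu2⟩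
  have harc : ConnSet (nbhd v ∩ (σ.P j)ᶜ) := nbhd_inter_compl_conn v (σ.P j) hcj hjcne
  have hvT : v ∈ Tset n := by rw [← σ.cover]; exact Set.mem_iUnion.mpr ⟨i, hv⟩
  have hwjc : w ∉ σ.P i := Set.disjoint_left.mp (σ.disj j i hij) hwj
  refine ⟨⟨fun l => if l = j then σ.P j ∪ {v} else σ.P l \ {v}, ?_, ?_, ?_⟩,
    by simp, fun l hl => by simp [hl]⟩
  · -- disjointness
    intro a b hab
    by_cases ha : a = j
    · subst ha
      rw [if_pos rfl, if_neg (Ne.symm hab)]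
      refine Set.disjoint_union_left.mpr ⟨(σ.disj a b hab).mono_right Set.diff_subset, ?_⟩
      exact Set.disjoint_singleton_left.mpr (fun h => h.2 rfl)
    · rw [if_neg ha]
      by_cases hb : b = j
      · subst hb
        rw [if_pos rfl]
        refine Set.disjoint_union_right.mpr ⟨(σ.disj a b hab).mono_left Set.diff_subset, ?_⟩
        exact Set.disjoint_singleton_right.mpr (fun h => h.2 rfl)
      · rw [if_neg hb]
        exact (σ.disj a b hab).mono Set.diff_subset Set.diff_subset
  · -- cover
    ext x
    simp only [Set.mem_iUnion]
    constructor
    · rintro ⟨l, hl⟩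
      by_cases h : l = j
      · rw [if_pos h] at hl
        rcases hl with h1 | h1
        · rw [← σ.cover]; exact Set.mem_iUnion.mpr ⟨j, h1⟩
        · rw [Set.mem_singleton_iff] at h1; exact h1 ▸ hvT
      · rw [if_neg h] at hl
        rw [← σ.cover]; exact Set.mem_iUnion.mpr ⟨l, hl.1⟩
    · intro hx
      have hx' : x ∈ ⋃ l, σ.P l := by rw [σ.cover]; exact hx
      obtain ⟨l, hl⟩ := Set.mem_iUnion.mp hx'
      by_cases hxv : x = v
      · exact ⟨j, by rw [if_pos rfl]; exact Or.inr hxv⟩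
      · by_cases h : l = j
        · exact ⟨j, by rw [if_pos rfl]; exact Or.inl (h ▸ hl)⟩
        · exact ⟨l, by rw [if_neg h]; exact ⟨hl, hxv⟩⟩
  · -- simple connectivity
    intro l
    by_cases hl : l = j
    · subst hl
      rw [if_pos rfl]
      constructor
      · exact connSet_union_singleton (σ.sc l).1 hwj hvw
      · have he : (σ.P l ∪ {v})ᶜ = (σ.P l)ᶜ \ {v} := by
          rw [Set.compl_union, ← Set.diff_eq]
        rw [he]
        exact connSet_diff_singleton (σ.sc l).2 hvnj harc
    · rw [if_neg hl]
      by_cases hli : l = i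
      · subst hli
        constructor
        · exact connSet_diff_singleton (σ.sc l).1 hv hci
        · have he : (σ.P l \ {v})ᶜ = (σ.P l)ᶜ ∪ {v} := by
            rw [Set.diff_eq, Set.compl_inter, compl_compl]
          rw [he]
          exact connSet_union_singleton (σ.sc l).2 hwjc hvw
      · have hvl : v ∉ σ.P l := Set.disjoint_left.mp (σ.disj i l (fun e => hli e.symm)) hv
        rw [Set.diff_singleton_eq_self hvl]
        exact σ.sc l

end Redistrict
end

section
/- Let P be a partition of T into three simply connected districts, let W ⊆ P_i be a simply connected subset of P_i, and let S be a connected component of P_i \ W containing at least one exposed vertex. Then S contains an exposed vertex x such that P_i \ {x} is simply connected. -/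
namespace Redistrict

/-! ### Auxiliary infrastructure for the proof -/

section Aux

lemma triAdj_iff (v w : ℤ × ℤ) : TriLattice.Adj v w ↔
    ((w.1-v.1 = 1 ∧ w.2-v.2 = 0) ∨ (w.1-v.1 = -1 ∧ w.2-v.2 = 0) ∨ (w.1-v.1 = 0 ∧ w.2-v.2 = 1)
      ∨ (w.1-v.1 = 0 ∧ w.2-v.2 = -1) ∨ (w.1-v.1 = 1 ∧ w.2-v.2 = -1) ∨ (w.1-v.1 = -1 ∧ w.2-v.2 = 1)) := by
  simp only [TriLattice, SimpleGraph.fromRel_adj, Prod.ext_iff, Prod.fst_sub, Prod.snd_sub,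
    ne_eq, Prod.mk.injEq]
  omega

/-- Adjacency restricted to a vertex set `A`. -/
def AdjIn (A : Set (ℤ × ℤ)) (a b : ℤ × ℤ) : Prop := a ∈ A ∧ b ∈ A ∧ TriLattice.Adj a b

/-- Reachability within a vertex set `A`. -/
def ReachIn (A : Set (ℤ × ℤ)) (a b : ℤ × ℤ) : Prop :=
  a ∈ A ∧ Relation.ReflTransGen (AdjIn A) a b

lemma adjIn_symm {A : Set (ℤ × ℤ)} : Symmetric (AdjIn A) :=
  fun _ _ h => ⟨h.2.1, h.1, h.2.2.symm⟩

lemma ReachIn.refl {A : Set (ℤ × ℤ)} {a : ℤ × ℤ} (ha : a ∈ A) : ReachIn A a a :=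
  ⟨ha, Relation.ReflTransGen.refl⟩

lemma ReachIn.mem_left {A : Set (ℤ × ℤ)} {a b : ℤ × ℤ} (h : ReachIn A a b) : a ∈ A := h.1

lemma ReachIn.mem_right {A : Set (ℤ × ℤ)} {a b : ℤ × ℤ} (h : ReachIn A a b) : b ∈ A := by
  obtain ⟨ha, h⟩ := h
  induction h with
  | refl => exact ha
  | tail _ h2 _ => exact h2.2.1

lemma ReachIn.tail {A : Set (ℤ × ℤ)} {a b c : ℤ × ℤ} (h : ReachIn A a b) (h2 : AdjIn A b c) :
    ReachIn A a c := ⟨h.1, h.2.tail h2⟩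

lemma ReachIn.single {A : Set (ℤ × ℤ)} {a b : ℤ × ℤ} (h : AdjIn A a b) : ReachIn A a b :=
  ⟨h.1, Relation.ReflTransGen.single h⟩

lemma ReachIn.trans {A : Set (ℤ × ℤ)} {a b c : ℤ × ℤ} (h : ReachIn A a b) (h' : ReachIn A b c) :
    ReachIn A a c := ⟨h.1, h.2.trans h'.2⟩

lemma ReachIn.symm {A : Set (ℤ × ℤ)} {a b : ℤ × ℤ} (h : ReachIn A a b) : ReachIn A b a :=
  ⟨h.mem_right, (@Relation.ReflTransGen.stdSymm _ _ ⟨fun _ _ hx => adjIn_symm hx⟩).symm _ _ h.2⟩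

lemma ReachIn.mono {A B : Set (ℤ × ℤ)} (hAB : A ⊆ B) {a b : ℤ × ℤ} (h : ReachIn A a b) :
    ReachIn B a b :=
  ⟨hAB h.1, Relation.ReflTransGen.mono (fun _ _ (hx : AdjIn A _ _) => (⟨hAB hx.1, hAB hx.2.1, hx.2.2⟩ : AdjIn B _ _)) _ _ h.2⟩

private lemma walk_to_rtg {A : Set (ℤ × ℤ)} :
    ∀ {u v : A}, (TriLattice.induce A).Walk u v → Relation.ReflTransGen (AdjIn A) u.val v.val := by
  intro u v p
  induction p with
  | nil => exact Relation.ReflTransGen.refl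
  | @cons a b c hadj p ih => exact Relation.ReflTransGen.head ⟨a.2, b.2, hadj⟩ ih

private lemma rtg_to_reach {A : Set (ℤ × ℤ)} {a b : ℤ × ℤ}
    (h : Relation.ReflTransGen (AdjIn A) a b) :
    ∀ (ha : a ∈ A) (hb : b ∈ A), (TriLattice.induce A).Reachable ⟨a, ha⟩ ⟨b, hb⟩ := by
  induction h with
  | refl => intro ha hb; rfl
  | @tail b c hab h2 ih =>
    intro ha hc
    exact (ih ha h2.1).trans
      (SimpleGraph.Adj.reachable (by exact h2.2.2 : (TriLattice.induce A).Adj ⟨b, h2.1⟩ ⟨c, h2.2.1⟩))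

lemma connSet_iff_s6 {A : Set (ℤ × ℤ)} :
    ConnSet A ↔ A.Nonempty ∧ ∀ a ∈ A, ∀ b ∈ A, ReachIn A a b := by
  constructor
  · intro h
    refine ⟨Set.nonempty_coe_sort.mp h.nonempty, fun a ha b hb => ?_⟩
    obtain ⟨p⟩ := h.preconnected ⟨a, ha⟩ ⟨b, hb⟩
    exact ⟨ha, walk_to_rtg p⟩
  · rintro ⟨hne, h⟩
    have : Nonempty A := Set.nonempty_coe_sort.mpr hne
    refine SimpleGraph.Connected.mk ?_
    rintro ⟨a, ha⟩ ⟨b, hb⟩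
    exact rtg_to_reach (h a ha b hb).2 ha hb

/-- If `K` is closed under adjacency within `A`, reachability from `K` stays in `K`. -/
lemma reach_closed {A K : Set (ℤ × ℤ)} {a b : ℤ × ℤ}
    (hcl : ∀ u v, u ∈ K → AdjIn A u v → v ∈ K)
    (h : ReachIn A a b) (ha : a ∈ K) : b ∈ K := by
  obtain ⟨-, h⟩ := h
  induction h with
  | refl => exact ha
  | tail _ h2 ih => exact hcl _ _ ih h2

/-- Escape lemma: if `K` is closed under adjacency within `A` except possibly towards `x`,
and some vertex outside `K` is reachable from `K` inside `A`, then `K` has a vertex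
adjacent to `x`. -/
lemma reach_escape {A K : Set (ℤ × ℤ)} {x a b : ℤ × ℤ}
    (hcl : ∀ u v, u ∈ K → AdjIn A u v → v = x ∨ v ∈ K)
    (h : ReachIn A a b) (ha : a ∈ K) (hb : b ∉ K) :
    ∃ u ∈ K, TriLattice.Adj u x := by
  obtain ⟨-, h⟩ := h
  induction h with
  | refl => exact absurd ha hb
  | @tail c d hac h2 ih =>
    by_cases hc : c ∈ K
    · rcases hcl _ _ hc h2 with rfl | hd
      · exact ⟨c, hc, h2.2.2⟩
      · exact absurd hd hb
    · exact ih hc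

/-- The reach-set (connected component) of `z` in `A` is internally connected. -/
lemma reach_component {A : Set (ℤ × ℤ)} {z b : ℤ × ℤ} (h : ReachIn A z b) :
    ReachIn {u | ReachIn A z u} z b := by
  obtain ⟨hz, h⟩ := h
  induction h with
  | refl => exact ReachIn.refl (ReachIn.refl hz)
  | @tail c d hzc h2 ih =>
    exact ih.tail ⟨ih.mem_right, (ih.mem_right : ReachIn A z c).tail h2, h2.2.2⟩

/-- If `y` is not reachable from `a` in `A`, reachability from `a` avoids `y`. -/
lemma reach_avoid {A : Set (ℤ × ℤ)} {a b y : ℤ × ℤ}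
    (h : ReachIn A a b) (hy : ¬ ReachIn A a y) : ReachIn (A \ {y}) a b := by
  obtain ⟨ha, h⟩ := h
  have hay : a ≠ y := fun e => hy (e ▸ ReachIn.refl ha)
  induction h with
  | refl => exact ReachIn.refl ⟨ha, hay⟩
  | @tail c d hac h2 ih =>
    have hc : ReachIn A a c := ⟨ha, hac⟩
    have hd : ReachIn A a d := hc.tail h2
    have hdy : d ≠ y := fun e => hy (e ▸ hd)
    have hcy : c ≠ y := fun e => hy (e ▸ hc)
    exact ih.tail ⟨⟨h2.1, hcy⟩, ⟨h2.2.1, hdy⟩, h2.2.2⟩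

/-- A union of two connected sets joined by an edge is connected. -/
lemma connSet_union {A B : Set (ℤ × ℤ)} {a₀ b₀ : ℤ × ℤ} (hA : ConnSet A) (hB : ConnSet B)
    (ha₀ : a₀ ∈ A) (hb₀ : b₀ ∈ B) (hadj : TriLattice.Adj a₀ b₀) : ConnSet (A ∪ B) := by
  rw [connSet_iff_s6] at hA hB ⊢
  refine ⟨⟨a₀, Or.inl ha₀⟩, ?_⟩
  have key : ∀ c ∈ A ∪ B, ReachIn (A ∪ B) a₀ c := by
    rintro c (hc | hc)
    · exact (hA.2 a₀ ha₀ c hc).mono Set.subset_union_left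
    · exact (ReachIn.single ⟨Or.inl ha₀, Or.inr hb₀, hadj⟩).trans
        (((hB.2 b₀ hb₀ c hc)).mono Set.subset_union_right)
  intro u hu v hv
  exact (key u hu).symm.trans (key v hv)

lemma connSet_insert {D : Set (ℤ × ℤ)} {x w : ℤ × ℤ} (hD : ConnSet D) (hw : w ∈ D)
    (hadj : TriLattice.Adj x w) : ConnSet (D ∪ {x}) := by
  refine connSet_union hD ?_ hw rfl hadj.symm
  rw [connSet_iff_s6]
  exact ⟨⟨x, rfl⟩, by rintro a rfl b rfl; exact ReachIn.refl rfl⟩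

lemma mem_Tset_iff {n : ℕ} {p : ℤ × ℤ} :
    p ∈ Tset n ↔ 1 ≤ p.1 ∧ p.1 ≤ (n : ℤ) ∧ 1 - p.1 ≤ p.2 ∧ p.2 ≤ 0 := Iff.rfl

lemma notmem_singleton_iff {p q : ℤ × ℤ} :
    p ∉ ({q} : Set (ℤ × ℤ)) ↔ ¬(p.1 = q.1 ∧ p.2 = q.2) := by
  simp [Prod.ext_iff]

lemma Tset_finite (n : ℕ) : (Tset n).Finite := by
  refine (Set.finite_Icc ((1 : ℤ), 1 - (n : ℤ)) ((n : ℤ), 0)).subset ?_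
  intro p hp
  have := mem_Tset_iff.mp hp
  simp only [Set.mem_Icc, Prod.le_def]
  omega

private lemma to_lastcol {n : ℕ} {x : ℤ × ℤ} :
    ∀ (k : ℕ) (v : ℤ × ℤ), v ∈ Tset n \ {x} → ((n : ℤ) - v.1).toNat ≤ k →
      ∃ u, u ∈ Tset n \ {x} ∧ u.1 = (n : ℤ) ∧ ReachIn (Tset n \ {x}) v u := by
  intro k
  induction k with
  | zero =>
    intro v hv hk
    have hm := mem_Tset_iff.mp hv.1
    have : v.1 = (n : ℤ) := by omega
    exact ⟨v, hv, this, ReachIn.refl hv⟩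
  | succ k ih =>
    intro v hv hk
    have hm := mem_Tset_iff.mp hv.1
    by_cases hn : v.1 = (n : ℤ)
    · exact ⟨v, hv, hn, ReachIn.refl hv⟩
    · have hlt : v.1 < (n : ℤ) := lt_of_le_of_ne hm.2.1 hn
      have hw1m : (v.1 + 1, v.2) ∈ Tset n := by rw [mem_Tset_iff]; omega
      have hw2m : (v.1 + 1, v.2 - 1) ∈ Tset n := by rw [mem_Tset_iff]; omega
      by_cases hx1 : (v.1 + 1, v.2) = x
      · -- use the diagonal step
        have hne : (v.1 + 1, v.2 - 1) ∉ ({x} : Set (ℤ × ℤ)) := by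
          rw [← hx1, notmem_singleton_iff]; omega
        have hadj : TriLattice.Adj v (v.1 + 1, v.2 - 1) := by rw [triAdj_iff]; omega
        have hstep : ReachIn (Tset n \ {x}) v (v.1 + 1, v.2 - 1) :=
          ReachIn.single ⟨hv, ⟨hw2m, hne⟩, hadj⟩
        obtain ⟨u, hu, hu1, hr⟩ := ih (v.1 + 1, v.2 - 1) ⟨hw2m, hne⟩ (by omega)
        exact ⟨u, hu, hu1, hstep.trans hr⟩
      · have hadj : TriLattice.Adj v (v.1 + 1, v.2) := by rw [triAdj_iff]; omega
        have hstep : ReachIn (Tset n \ {x}) v (v.1 + 1, v.2) :=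
          ReachIn.single ⟨hv, ⟨hw1m, hx1⟩, hadj⟩
        obtain ⟨u, hu, hu1, hr⟩ := ih (v.1 + 1, v.2) ⟨hw1m, hx1⟩ (by omega)
        exact ⟨u, hu, hu1, hstep.trans hr⟩

private lemma col_reach {n : ℕ} {x : ℤ × ℤ} :
    ∀ (k : ℕ) (b b' : ℤ), ((n : ℤ), b) ∈ Tset n \ {x} → ((n : ℤ), b') ∈ Tset n \ {x} →
      b' ≤ b → (b - b').toNat ≤ k → ReachIn (Tset n \ {x}) ((n : ℤ), b) ((n : ℤ), b') := by
  intro k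
  induction k with
  | zero =>
    intro b b' hb hb' hle hk
    have : b = b' := by omega
    subst this; exact ReachIn.refl hb
  | succ k ih =>
    intro b b' hb hb' hle hk
    have hmb := mem_Tset_iff.mp hb.1
    have hmb' := mem_Tset_iff.mp hb'.1
    by_cases heq : b = b'
    · subst heq; exact ReachIn.refl hb
    · have hlt : b' < b := lt_of_le_of_ne hle (Ne.symm heq)
      by_cases hx : ((n : ℤ), b - 1) = x
      · -- dodge through column n - 1
        subst hx
        have hbne : b' ≠ b - 1 := by
          intro h
          exact hb'.2 (by rw [h]; rfl)
        have hble : b' ≤ b - 2 := by omega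
        have hq1 : ((n : ℤ) - 1, b) ∈ Tset n \ {((n : ℤ), b - 1)} :=
          ⟨mem_Tset_iff.mpr (by omega), notmem_singleton_iff.mpr (by omega)⟩
        have hq2 : ((n : ℤ) - 1, b - 1) ∈ Tset n \ {((n : ℤ), b - 1)} :=
          ⟨mem_Tset_iff.mpr (by omega), notmem_singleton_iff.mpr (by omega)⟩
        have hq3 : ((n : ℤ), b - 2) ∈ Tset n \ {((n : ℤ), b - 1)} :=
          ⟨mem_Tset_iff.mpr (by omega), notmem_singleton_iff.mpr (by omega)⟩
        have s1 : ReachIn (Tset n \ {((n : ℤ), b - 1)}) ((n : ℤ), b) ((n : ℤ) - 1, b) :=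
          ReachIn.single ⟨hb, hq1, by rw [triAdj_iff]; omega⟩
        have s2 := s1.tail (⟨hq1, hq2, by rw [triAdj_iff]; omega⟩ : AdjIn _ _ _)
        have s3 := s2.tail (⟨hq2, hq3, by rw [triAdj_iff]; omega⟩ : AdjIn _ _ _)
        exact s3.trans (ih (b - 2) b' hq3 hb' (by omega) (by omega))
      · have hq : ((n : ℤ), b - 1) ∈ Tset n \ {x} :=
          ⟨mem_Tset_iff.mpr (by omega), hx⟩
        have s1 : ReachIn (Tset n \ {x}) ((n : ℤ), b) ((n : ℤ), b - 1) :=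
          ReachIn.single ⟨hb, hq, by rw [triAdj_iff]; omega⟩
        exact s1.trans (ih (b - 1) b' hq hb' (by omega) (by omega))

/-- The triangle minus any single vertex is reach-connected. -/
lemma reach_T_del {n : ℕ} {x v w : ℤ × ℤ} (hv : v ∈ Tset n \ {x}) (hw : w ∈ Tset n \ {x}) :
    ReachIn (Tset n \ {x}) v w := by
  obtain ⟨u, hu, hu1, hru⟩ := to_lastcol (n := n) (x := x) ((n : ℤ) - v.1).toNat v hv le_rfl
  obtain ⟨u', hu', hu'1, hru'⟩ := to_lastcol (n := n) (x := x) ((n : ℤ) - w.1).toNat w hw le_rfl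
  obtain ⟨u1, u2⟩ := u
  obtain ⟨u'1, u'2⟩ := u'
  simp only at hu1 hu'1
  subst hu1; subst hu'1
  have hcol : ReachIn (Tset n \ {x}) ((n : ℤ), u2) ((n : ℤ), u'2) := by
    rcases le_total u'2 u2 with h | h
    · exact col_reach (u2 - u'2).toNat u2 u'2 hu hu' h le_rfl
    · exact (col_reach (u'2 - u2).toNat u'2 u2 hu' hu h le_rfl).symm
  exact (hru.trans hcol).trans hru'.symm

end Aux

/-- Lemma 3.8: if `W ⊆ P_i` is simply connected and `S` is a connected component of
`P_i \ W` containing an exposed vertex, then `S` contains an exposed vertex `x` such that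
`P_i \ {x}` is simply connected. -/
theorem component_has_removable_exposed (n : ℕ) (σ : TriPartition n) (i : Fin 3)
    (W S : Set (ℤ × ℤ)) (hW : W ⊆ σ.P i) (hWsc : SimplyConn W)
    (hS : IsCompOf S (σ.P i \ W))
    (hexp : ∃ x ∈ S, Exposed σ i x) :
    ∃ x ∈ S, Exposed σ i x ∧ SimplyConn (σ.P i \ {x}) := by
  classical
  have hPiconn : ConnSet (σ.P i) := (σ.sc i).1
  have hPic : ConnSet (σ.P i)ᶜ := (σ.sc i).2
  have hPiT : σ.P i ⊆ Tset n := by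
    rw [← σ.cover]; exact Set.subset_iUnion σ.P i
  have hPifin : (σ.P i).Finite := (Tset_finite n).subset hPiT
  have hPi_reach : ∀ a ∈ σ.P i, ∀ b ∈ σ.P i, ReachIn (σ.P i) a b :=
    (connSet_iff_s6.mp hPiconn).2
  obtain ⟨w₀, hw₀⟩ : W.Nonempty := Set.nonempty_coe_sort.mp hWsc.1.nonempty
  set E : Set (ℤ × ℤ) := {v | v ∈ S ∧ Exposed σ i v} with hE
  have hEne : E.Nonempty := by obtain ⟨x₀, h1, h2⟩ := hexp; exact ⟨x₀, h1, h2⟩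
  have hEfin : E.Finite := hPifin.subset (fun v hv => hv.2.1)
  set m : ℤ × ℤ → ℕ := fun v => {z | ReachIn (σ.P i \ {v}) w₀ z}.ncard with hm
  obtain ⟨x, hxE, hxmax⟩ := Set.exists_max_image E m hEfin hEne
  have hxS : x ∈ S := hxE.1
  have hxPi : x ∈ σ.P i := hxE.2.1
  have hxnotW : x ∉ W := (hS.2.1 hxS).2
  have hw₀x : w₀ ≠ x := fun e => hxnotW (e ▸ hw₀)
  have hw₀A : w₀ ∈ σ.P i \ {x} := ⟨hW hw₀, hw₀x⟩
  have hWA : W ⊆ σ.P i \ {x} := fun p hp => ⟨hW hp, fun e => hxnotW (e ▸ hp)⟩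
  refine ⟨x, hxS, hxE.2, ?_, ?_⟩
  · -- the deleted set is connected
    by_contra hnc
    have hzex : ∃ z ∈ σ.P i \ {x}, ¬ ReachIn (σ.P i \ {x}) w₀ z := by
      by_contra h
      push_neg at h
      exact hnc (connSet_iff_s6.mpr ⟨⟨w₀, hw₀A⟩,
        fun a ha b hb => (h a ha).symm.trans (h b hb)⟩)
    obtain ⟨z, hz, hznr⟩ := hzex
    set K : Set (ℤ × ℤ) := {u | ReachIn (σ.P i \ {x}) z u} with hK
    have hzK : z ∈ K := ReachIn.refl hz
    have hKsub : K ⊆ σ.P i \ {x} := fun u hu => ReachIn.mem_right hu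
    have hw₀K : w₀ ∉ K := fun h => hznr (ReachIn.symm h)
    have hKcl : ∀ u v, u ∈ K → AdjIn (σ.P i) u v → v = x ∨ v ∈ K := by
      rintro u v hu ⟨hu', hv', hadj⟩
      by_cases hvx : v = x
      · exact Or.inl hvx
      · exact Or.inr (ReachIn.tail hu ⟨hKsub hu, ⟨hv', hvx⟩, hadj⟩)
    obtain ⟨u₁, hu₁K, hu₁adj⟩ :=
      reach_escape hKcl (hPi_reach z hz.1 w₀ (hW hw₀)) hzK hw₀K
    have hKconn : ConnSet K := by
      refine connSet_iff_s6.mpr ⟨⟨z, hzK⟩, fun a ha b hb => ?_⟩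
      exact (reach_component ha).symm.trans (reach_component hb)
    have hKW : ∀ u ∈ K, u ∉ W := by
      intro u hu huW
      exact hw₀K (hu.trans (((connSet_iff_s6.mp hWsc.1).2 u huW w₀ hw₀).mono hWA))
    have hSK : K ⊆ S := by
      have hconn' : ConnSet (S ∪ K) := connSet_union hS.2.2.1 hKconn hxS hu₁K hu₁adj.symm
      have hsub : S ∪ K ⊆ σ.P i \ W := by
        rintro u (hu | hu)
        · exact hS.2.1 hu
        · exact ⟨(hKsub hu).1, hKW u hu⟩
      have heq := hS.2.2.2 (S ∪ K) Set.subset_union_left hsub hconn'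
      exact fun u hu => heq ▸ Set.mem_union_right S hu
    by_cases hexpK : ∃ y ∈ K, Exposed σ i y
    · -- a component beyond `x` contains an exposed vertex: contradicts maximality of `m x`
      obtain ⟨y, hyK, hye⟩ := hexpK
      have hyE : y ∈ E := ⟨hSK hyK, hye⟩
      have hyx : y ≠ x := (hKsub hyK).2
      set C₀ : Set (ℤ × ℤ) := {c | ReachIn (σ.P i \ {x}) w₀ c} with hC₀
      have hxC₀ : x ∉ C₀ := fun h => (ReachIn.mem_right h).2 rfl
      have hyC₀ : y ∉ C₀ := fun h => hw₀K (hyK.trans h.symm)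
      have hyreach : ¬ ReachIn (σ.P i \ {x}) w₀ y := hyC₀
      have hsubxy : (σ.P i \ {x}) \ {y} ⊆ σ.P i \ {y} :=
        fun p hp => ⟨hp.1.1, hp.2⟩
      have hCsub : ∀ c ∈ C₀, ReachIn (σ.P i \ {y}) w₀ c := by
        intro c hc
        exact ((reach_avoid hc hyreach).mono hsubxy)
      have hC₀cl : ∀ u v, u ∈ C₀ → AdjIn (σ.P i) u v → v = x ∨ v ∈ C₀ := by
        rintro u v hu ⟨hu', hv', hadj⟩
        by_cases hvx : v = x
        · exact Or.inl hvx
        · exact Or.inr (ReachIn.tail hu ⟨ReachIn.mem_right hu, ⟨hv', hvx⟩, hadj⟩)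
      have hw₀C₀ : w₀ ∈ C₀ := ReachIn.refl hw₀A
      obtain ⟨u₂, hu₂C₀, hu₂adj⟩ :=
        reach_escape hC₀cl (hPi_reach w₀ (hW hw₀) x hxPi) hw₀C₀ hxC₀
      have hu₂y : u₂ ≠ y := fun e => hyC₀ (e ▸ hu₂C₀)
      have hxC₀y : ReachIn (σ.P i \ {y}) w₀ x := by
        refine (hCsub u₂ hu₂C₀).tail ⟨⟨(ReachIn.mem_right hu₂C₀).1, hu₂y⟩, ⟨hxPi, Ne.symm hyx⟩, hu₂adj⟩
      have hss : C₀ ⊂ {c | ReachIn (σ.P i \ {y}) w₀ c} := by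
        constructor
        · exact fun c hc => hCsub c hc
        · intro hcon
          exact hxC₀ (hcon hxC₀y)
      have hfin2 : {c | ReachIn (σ.P i \ {y}) w₀ c}.Finite :=
        hPifin.subset (fun c hc => (ReachIn.mem_right hc).1)
      have : m x < m y := Set.ncard_lt_ncard hss hfin2
      exact absurd (hxmax y hyE) (not_le.mpr this)
    · -- no exposed vertex beyond `x`: contradicts connectivity of `T` minus a vertex
      push_neg at hexpK
      obtain ⟨j, hj⟩ : ∃ j : Fin 3, j ≠ i := by
        exact exists_ne i
      obtain ⟨p, hp⟩ : (σ.P j).Nonempty := Set.nonempty_coe_sort.mp (σ.sc j).1.nonempty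
      have hpT : p ∈ Tset n := by rw [← σ.cover]; exact Set.mem_iUnion.mpr ⟨j, hp⟩
      have hpPi : p ∉ σ.P i := fun h => Set.disjoint_left.mp (σ.disj j i hj) hp h
      have hpx : p ≠ x := fun e => hpPi (e ▸ hxPi)
      have hKclT : ∀ u v, u ∈ K → AdjIn (Tset n \ {x}) u v → v ∈ K := by
        rintro u v hu ⟨hu', hv', hadj⟩
        have huPi : u ∈ σ.P i := (hKsub hu).1
        have hvPi : v ∈ σ.P i := by
          by_contra hvn
          exact hexpK u hu ⟨huPi, v, hv'.1, hadj, hvn⟩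
        exact ReachIn.tail hu ⟨hKsub hu, ⟨hvPi, hv'.2⟩, hadj⟩
      have hzT : z ∈ Tset n \ {x} := ⟨hPiT hz.1, hz.2⟩
      have hpT' : p ∈ Tset n \ {x} := ⟨hpT, hpx⟩
      exact hpPi ((reach_closed hKclT (reach_T_del hzT hpT') hzK : p ∈ K).mem_right).1
  · -- the complement is connected
    obtain ⟨-, w, hwT, hadj, hwP⟩ := hxE.2
    have hcompl : (σ.P i \ {x})ᶜ = (σ.P i)ᶜ ∪ {x} := by
      rw [Set.diff_eq, Set.compl_inter, compl_compl]
    rw [hcompl]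
    exact connSet_insert hPic hwP hadj

end Redistrict
end

section
/- Let P be a partition of T into three simply connected districts and let a, b, c, d be four consecutive vertices along bd(T). Then it is impossible that a, c ∈ P_i and b, d ∈ P_j for districts i ≠ j. -/
namespace Redistrict

/-! ### Machinery for Lemma 4.1: a discrete parity (winding number) argument. -/

abbrev Pt := ℤ × ℤ

lemma adj_iff (u v : Pt) : TriLattice.Adj u v ↔
    ((v.1 = u.1 + 1 ∧ v.2 = u.2) ∨ (v.1 = u.1 - 1 ∧ v.2 = u.2) ∨
     (v.1 = u.1 ∧ v.2 = u.2 + 1) ∨ (v.1 = u.1 ∧ v.2 = u.2 - 1) ∨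
     (v.1 = u.1 + 1 ∧ v.2 = u.2 - 1) ∨ (v.1 = u.1 - 1 ∧ v.2 = u.2 + 1)) := by
  simp only [TriLattice, SimpleGraph.fromRel_adj, Prod.ext_iff, Prod.fst_sub, Prod.snd_sub,
    ne_eq]
  constructor
  · rintro ⟨h, h2⟩; omega
  · intro h; omega

/-- Parity (in `ZMod 2`) of crossings of the edge `{u,v}` with the downward ray from
(a slight perturbation of) `z`. -/
def cE (u v z : Pt) : ZMod 2 :=
  if (u.1 + 1 = v.1 ∧ u.1 = z.1 ∧ u.2 ≤ z.2) ∨ (v.1 + 1 = u.1 ∧ v.1 = z.1 ∧ v.2 ≤ z.2)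
  then 1 else 0

/-- Indicator that `w` lies in the open strip swept by the ray as `z` moves to `z'`. -/
def sE (z z' w : Pt) : ZMod 2 :=
  if z'.1 = z.1 + 1 ∧ z'.2 = z.2 then (if w.1 = z.1 + 1 ∧ w.2 ≤ z.2 then 1 else 0)
  else if z.1 = z'.1 + 1 ∧ z.2 = z'.2 then (if w.1 = z'.1 + 1 ∧ w.2 ≤ z'.2 then 1 else 0)
  else if z'.1 = z.1 + 1 ∧ z'.2 = z.2 - 1 then
    (if w.1 = z.1 + 1 ∧ w.2 ≤ z.2 - 1 then 1 else 0)
  else if z.1 = z'.1 + 1 ∧ z.2 = z'.2 - 1 then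
    (if w.1 = z'.1 + 1 ∧ w.2 ≤ z'.2 - 1 then 1 else 0)
  else 0

/-- Parity of crossings of the edge `{u,v}` with the segment from `z` to `z'`. -/
def tE (z z' u v : Pt) : ZMod 2 := cE u v z + cE u v z' + sE z z' u + sE z z' v

/-- Crossing parity of a chain of vertices with the downward ray from `z`. -/
def chF : List Pt → Pt → ZMod 2
  | u :: v :: l, z => cE u v z + chF (v :: l) z
  | _, _ => 0

/-- Sum of `tE z z'` over the edges of a chain. -/
def chT : List Pt → Pt → Pt → ZMod 2
  | u :: v :: l, z, z' => tE z z' u v + chT (v :: l) z z'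
  | _, _, _ => 0

/-- Last element of a list (default `(0,0)`). -/
def lst : List Pt → Pt
  | [] => (0, 0)
  | [x] => x
  | _ :: y :: l => lst (y :: l)

@[simp] lemma lst_singleton (x : Pt) : lst [x] = x := rfl
@[simp] lemma lst_cons_cons (x y : Pt) (l : List Pt) : lst (x :: y :: l) = lst (y :: l) := rfl

lemma lst_cons_of_ne_nil (x : Pt) (l : List Pt) (h : l ≠ []) : lst (x :: l) = lst l := by
  cases l with
  | nil => exact absurd rfl h
  | cons y l => rfl

lemma lst_append_cons (l1 : List Pt) (x : Pt) (l2 : List Pt) :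
    lst (l1 ++ x :: l2) = lst (x :: l2) := by
  induction l1 with
  | nil => rfl
  | cons u l1 ih =>
    rw [List.cons_append, lst_cons_of_ne_nil]
    · exact ih
    · simp

lemma zmod2_add_self (x : ZMod 2) : x + x = 0 := by
  have : ∀ x : ZMod 2, x + x = 0 := by decide
  exact this x

lemma zmod2_eq_of_add_eq_zero {x y : ZMod 2} (h : x + y = 0) : x = y := by
  have : ∀ x y : ZMod 2, x + y = 0 → x = y := by decide
  exact this x y h

/-- Master identity: moving the basepoint from `z` to `z'` changes the ray-crossing
parity of a chain by the segment-crossing sum plus strip corrections at the ends. -/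
lemma chF_move (l : List Pt) (z z' : Pt) :
    chF l z + chF l z' = chT l z z' + sE z z' l.headI + sE z z' (lst l) := by
  induction l with
  | nil =>
    show (0 : ZMod 2) + 0 = 0 + sE z z' ((0,0) : Pt) + sE z z' ((0,0) : Pt)
    rw [zero_add, zero_add, zmod2_add_self]
  | cons u l ih =>
    cases l with
    | nil =>
      show (0 : ZMod 2) + 0 = 0 + sE z z' u + sE z z' u
      rw [zero_add, zero_add, zmod2_add_self]
    | cons v l =>
      have h2 : (2 : ZMod 2) = 0 := rfl
      have hh : (v :: l).headI = v := rfl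
      rw [hh] at ih
      show cE u v z + chF (v :: l) z + (cE u v z' + chF (v :: l) z') =
        tE z z' u v + chT (v :: l) z z' + sE z z' u + sE z z' (lst (v :: l))
      unfold tE
      linear_combination ih - (sE z z' u) * h2

lemma chF_eq_of_closed (l : List Pt) (z z' : Pt) (hcl : l.headI = lst l)
    (hT : chT l z z' = 0) : chF l z = chF l z' := by
  have := chF_move l z z'
  rw [hcl, hT, zero_add, zmod2_add_self] at this
  exact zmod2_eq_of_add_eq_zero this

lemma chT_snoc_aux (l : List Pt) : ∀ u x z z',
    chT ((u :: l) ++ [x]) z z' = chT (u :: l) z z' + tE z z' (lst (u :: l)) x := by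
  induction l with
  | nil => intro u x z z'; show tE z z' u x + 0 = 0 + tE z z' u x; ring
  | cons v l ih =>
    intro u x z z'
    show tE z z' u v + chT ((v :: l) ++ [x]) z z' =
      tE z z' u v + chT (v :: l) z z' + tE z z' (lst (u :: v :: l)) x
    rw [ih v x z z', lst_cons_cons]
    ring

lemma chT_snoc (l : List Pt) (h : l ≠ []) (x : Pt) (z z' : Pt) :
    chT (l ++ [x]) z z' = chT l z z' + tE z z' (lst l) x := by
  cases l with
  | nil => exact absurd rfl h
  | cons u l => exact chT_snoc_aux l u x z z'

lemma chT_append_cons (l1 : List Pt) (x : Pt) (l2 : List Pt) (z z' : Pt) :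
    chT (l1 ++ x :: l2) z z' = chT (l1 ++ [x]) z z' + chT (x :: l2) z z' := by
  induction l1 with
  | nil => show chT (x :: l2) z z' = 0 + chT (x :: l2) z z'; rw [zero_add]
  | cons u l1 ih =>
    cases l1 with
    | nil =>
      show tE z z' u x + chT (x :: l2) z z' = (tE z z' u x + 0) + chT (x :: l2) z z'
      ring
    | cons v l1 =>
      show tE z z' u v + chT ((v :: l1) ++ x :: l2) z z' =
        (tE z z' u v + chT ((v :: l1) ++ [x]) z z') + chT (x :: l2) z z'
      rw [ih]
      ring

/-- Sum of `tE` vanishes on a chain all of whose edges have `tE = 0`. -/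
lemma chT_eq_zero (l : List Pt) (z z' : Pt)
    (h : ∀ u v : Pt, TriLattice.Adj u v → u ∈ l → v ∈ l → tE z z' u v = 0)
    (hch : List.Chain' TriLattice.Adj l) : chT l z z' = 0 := by
  induction l with
  | nil => rfl
  | cons u l ih =>
    cases l with
    | nil => rfl
    | cons v l =>
      simp only [List.Chain', List.isChain_cons_cons] at hch
      simp only [chT]
      rw [h u v hch.1 (by simp) (by simp), ih (fun a b hab ha hb => h a b hab
        (List.mem_cons_of_mem _ ha) (List.mem_cons_of_mem _ hb)) hch.2, add_zero]


lemma sE_right (zx zy : ℤ) (w : Pt) :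
    sE (zx, zy) (zx + 1, zy) w = if w.1 = zx + 1 ∧ w.2 ≤ zy then 1 else 0 := by
  unfold sE; split_ifs <;> first | rfl | omega

lemma sE_left (zx zy : ℤ) (w : Pt) :
    sE (zx, zy) (zx - 1, zy) w = if w.1 = zx ∧ w.2 ≤ zy then 1 else 0 := by
  unfold sE; split_ifs <;> first | rfl | omega

lemma sE_up (zx zy : ℤ) (w : Pt) : sE (zx, zy) (zx, zy + 1) w = 0 := by
  unfold sE; split_ifs <;> first | rfl | omega

lemma sE_down (zx zy : ℤ) (w : Pt) : sE (zx, zy) (zx, zy - 1) w = 0 := by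
  unfold sE; split_ifs <;> first | rfl | omega

lemma sE_dr (zx zy : ℤ) (w : Pt) :
    sE (zx, zy) (zx + 1, zy - 1) w = if w.1 = zx + 1 ∧ w.2 ≤ zy - 1 then 1 else 0 := by
  unfold sE; split_ifs <;> first | rfl | omega

lemma sE_ul (zx zy : ℤ) (w : Pt) :
    sE (zx, zy) (zx - 1, zy + 1) w = if w.1 = zx ∧ w.2 ≤ zy then 1 else 0 := by
  unfold sE; split_ifs <;> first | rfl | omega

set_option maxHeartbeats 3000000 in
lemma tE_eq_zero {z z' u v : Pt} (hzz' : TriLattice.Adj z z') (huv : TriLattice.Adj u v)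
    (h1 : ¬(u.1 = z.1 ∧ u.2 = z.2)) (h2 : ¬(u.1 = z'.1 ∧ u.2 = z'.2))
    (h3 : ¬(v.1 = z.1 ∧ v.2 = z.2)) (h4 : ¬(v.1 = z'.1 ∧ v.2 = z'.2)) :
    tE z z' u v = 0 := by
  obtain ⟨zx, zy⟩ := z
  obtain ⟨zx', zy'⟩ := z'
  obtain ⟨ux, uy⟩ := u
  obtain ⟨vx, vy⟩ := v
  rw [adj_iff] at hzz' huv
  dsimp only at hzz' huv h1 h2 h3 h4
  unfold tE
  rcases hzz' with ⟨e1, e2⟩ | ⟨e1, e2⟩ | ⟨e1, e2⟩ | ⟨e1, e2⟩ | ⟨e1, e2⟩ | ⟨e1, e2⟩ <;>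
      subst e1 <;> subst e2 <;>
    [rw [sE_right, sE_right]; rw [sE_left, sE_left]; rw [sE_up, sE_up];
     rw [sE_down, sE_down]; rw [sE_dr, sE_dr]; rw [sE_ul, sE_ul]] <;>
    unfold cE <;> dsimp only <;>
    rcases huv with ⟨e1, e2⟩ | ⟨e1, e2⟩ | ⟨e1, e2⟩ | ⟨e1, e2⟩ | ⟨e1, e2⟩ | ⟨e1, e2⟩ <;>
    subst e1 <;> subst e2 <;> split_ifs <;> first | rfl | omega

lemma tE_row (zx zy : ℤ) (u v : Pt)
    (hx : u.1 = v.1 ∨ u.1 + 1 = v.1 ∨ v.1 + 1 = u.1)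
    (hu : u.2 ≤ zy) (hv : v.2 ≤ zy) : tE (zx, zy) (zx + 1, zy) u v = 0 := by
  unfold tE
  rw [sE_right, sE_right]
  unfold cE
  dsimp only
  split_ifs <;> first | rfl | omega

lemma tE_far (zx zy : ℤ) (u v : Pt)
    (hu : u.1 ≤ zx) (hv : v.1 ≤ zx) : tE (zx, zy) (zx + 1, zy) u v = 0 := by
  unfold tE
  rw [sE_right, sE_right]
  unfold cE
  dsimp only
  split_ifs <;> first | rfl | omega

lemma cE_far {u v z : Pt} (hu : u.1 < z.1) (hv : v.1 < z.1) : cE u v z = 0 := by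
  unfold cE
  split_ifs <;> first | rfl | omega

lemma chF_snoc_aux (l : List Pt) : ∀ u x z,
    chF ((u :: l) ++ [x]) z = chF (u :: l) z + cE (lst (u :: l)) x z := by
  induction l with
  | nil => intro u x z; show cE u x z + 0 = 0 + cE u x z; ring
  | cons v l ih =>
    intro u x z
    show cE u v z + chF ((v :: l) ++ [x]) z =
      cE u v z + chF (v :: l) z + cE (lst (u :: v :: l)) x z
    rw [ih v x z, lst_cons_cons]
    ring

lemma chF_append_cons (l1 : List Pt) (x : Pt) (l2 : List Pt) (z : Pt) :
    chF (l1 ++ x :: l2) z = chF (l1 ++ [x]) z + chF (x :: l2) z := by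
  induction l1 with
  | nil => show chF (x :: l2) z = 0 + chF (x :: l2) z; rw [zero_add]
  | cons u l1 ih =>
    cases l1 with
    | nil =>
      show cE u x z + chF (x :: l2) z = (cE u x z + 0) + chF (x :: l2) z
      ring
    | cons v l1 =>
      show cE u v z + chF ((v :: l1) ++ x :: l2) z =
        (cE u v z + chF ((v :: l1) ++ [x]) z) + chF (x :: l2) z
      rw [ih]
      ring

lemma chT_split (l1 : List Pt) (h : l1 ≠ []) (x : Pt) (l2 : List Pt) (z z' : Pt) :
    chT (l1 ++ x :: l2) z z' = chT l1 z z' + chT (lst l1 :: x :: l2) z z' := by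
  rw [chT_append_cons, chT_snoc l1 h]
  show _ = chT l1 z z' + (tE z z' (lst l1) x + chT (x :: l2) z z')
  ring

lemma chF_split (l1 : List Pt) (h : l1 ≠ []) (x : Pt) (l2 : List Pt) (z : Pt) :
    chF (l1 ++ x :: l2) z = chF l1 z + chF (lst l1 :: x :: l2) z := by
  rw [chF_append_cons]
  cases l1 with
  | nil => exact absurd rfl h
  | cons u l1 =>
    rw [chF_snoc_aux]
    show _ = chF (u :: l1) z + (cE (lst (u :: l1)) x z + chF (x :: l2) z)
    ring

lemma getLast?_eq_lst (l : List Pt) (h : l ≠ []) : l.getLast? = some (lst l) := by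
  induction l with
  | nil => exact absurd rfl h
  | cons u l ih =>
    cases l with
    | nil => rfl
    | cons v l =>
      rw [List.getLast?_cons_cons, ih (by simp), lst_cons_cons]

lemma headI_append (l1 l2 : List Pt) (h : l1 ≠ []) : (l1 ++ l2).headI = l1.headI := by
  cases l1 with
  | nil => exact absurd rfl h
  | cons u l1 => rfl

lemma headI_eq_head (l : List Pt) (h : l ≠ []) : l.headI = l.head h := by
  cases l with
  | nil => exact absurd rfl h
  | cons u l => rfl

lemma lst_eq_getLast (l : List Pt) (h : l ≠ []) : lst l = l.getLast h := by
  induction l with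
  | nil => exact absurd rfl h
  | cons u l ih =>
    cases l with
    | nil => rfl
    | cons v l => rw [lst_cons_cons, List.getLast_cons (by simp), ih (by simp)]

/-- Extract a chain (list of consecutively adjacent vertices) inside a connected set. -/
lemma exists_chain {S : Set Pt} (h : ConnSet S) {x y : Pt} (hx : x ∈ S) (hy : y ∈ S) :
    ∃ l : List Pt, l ≠ [] ∧ List.Chain' TriLattice.Adj l ∧ (∀ v ∈ l, v ∈ S) ∧
      l.headI = x ∧ lst l = y := by
  obtain ⟨w⟩ := h.preconnected ⟨x, hx⟩ ⟨y, hy⟩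
  have hne : w.support.map Subtype.val ≠ [] := by
    simp [w.support_ne_nil]
  refine ⟨w.support.map Subtype.val, hne, ?_, ?_, ?_, ?_⟩
  · exact List.isChain_map_of_isChain _ (fun a b hab => by simpa using hab) (SimpleGraph.Walk.isChain_adj_support w)
  · intro v hv
    obtain ⟨u, _, rfl⟩ := List.mem_map.mp hv
    exact u.2
  · rw [headI_eq_head _ hne, List.head_map]
    have := w.head_support
    rw [this]
  · rw [lst_eq_getLast _ hne, List.getLast_map]
    have := w.getLast_support
    rw [this]

/-- Crossing parity with respect to a closed chain is constant along a chain disjoint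
from it. -/
lemma chF_eq_along (C : List Pt) (hC : C.headI = lst C)
    (hCch : List.Chain' TriLattice.Adj C) (l : List Pt)
    (hl : List.Chain' TriLattice.Adj l)
    (hdis : ∀ z ∈ l, ∀ x ∈ C, x ≠ z) : chF C l.headI = chF C (lst l) := by
  induction l with
  | nil => rfl
  | cons u l ih =>
    cases l with
    | nil => rfl
    | cons v l =>
      simp only [List.Chain', List.isChain_cons_cons] at hl
      have h1 : chF C u = chF C v := by
        apply chF_eq_of_closed C u v hC
        apply chT_eq_zero _ _ _ _ hCch
        intro p q hpq hp hq
        have hpu : p ≠ u := hdis u (by simp) p hp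
        have hpv : p ≠ v := hdis v (by simp) p hp
        have hqu : q ≠ u := hdis u (by simp) q hq
        have hqv : q ≠ v := hdis v (by simp) q hq
        refine tE_eq_zero hl.1 hpq (fun hh => hpu (Prod.ext_iff.mpr hh))
          (fun hh => hpv (Prod.ext_iff.mpr hh)) (fun hh => hqu (Prod.ext_iff.mpr hh))
          (fun hh => hqv (Prod.ext_iff.mpr hh))
      have h2 : chF C ((v :: l).headI) = chF C (lst (v :: l)) :=
        ih hl.2 (fun z hz => hdis z (List.mem_cons_of_mem _ hz))
      rw [lst_cons_cons]
      exact h1.trans h2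

lemma chF_vanish (C : List Pt) (z : Pt) (h : ∀ v ∈ C, v.1 < z.1) : chF C z = 0 := by
  induction C with
  | nil => rfl
  | cons u C ih =>
    cases C with
    | nil => rfl
    | cons v C =>
      show cE u v z + chF (v :: C) z = 0
      rw [cE_far (h u (by simp)) (h v (by simp)),
        ih (fun w hw => h w (List.mem_cons_of_mem _ hw)), add_zero]

lemma zmod2_contra {x y : ZMod 2} (hxy : x = y) (hx : x = 1) (hy : y = 0) : False := by
  rw [hx, hy] at hxy
  exact one_ne_zero hxy


lemma chF_add_eq (C : List Pt) (hcl : C.headI = lst C) (z z' : Pt) :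
    chF C z + chF C z' = chT C z z' := by
  have h := chF_move C z z'
  rw [hcl] at h
  have h2 := zmod2_add_self (sE z z' (lst C))
  linear_combination h + h2

lemma adj_x {u v : Pt} (h : TriLattice.Adj u v) :
    u.1 = v.1 ∨ u.1 + 1 = v.1 ∨ v.1 + 1 = u.1 := by
  rw [adj_iff] at h; omega

lemma mem_Tset {n : ℕ} {x : Pt} :
    x ∈ Tset n ↔ 1 ≤ x.1 ∧ x.1 ≤ (n : ℤ) ∧ 1 - x.1 ≤ x.2 ∧ x.2 ≤ 0 := Iff.rfl

lemma districts_subset {n : ℕ} (σ : TriPartition n) (k : Fin 3) : σ.P k ⊆ Tset n := by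
  rw [← σ.cover]; exact Set.subset_iUnion σ.P k

lemma cE_eq_one {u v z : Pt}
    (h : (u.1 + 1 = v.1 ∧ u.1 = z.1 ∧ u.2 ≤ z.2) ∨ (v.1 + 1 = u.1 ∧ v.1 = z.1 ∧ v.2 ≤ z.2)) :
    cE u v z = 1 := if_pos h

lemma cE_eq_zero' {u v z : Pt}
    (h : ¬((u.1 + 1 = v.1 ∧ u.1 = z.1 ∧ u.2 ≤ z.2) ∨ (v.1 + 1 = u.1 ∧ v.1 = z.1 ∧ v.2 ≤ z.2))) :
    cE u v z = 0 := if_neg h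

lemma zmod2_first_of_sum {x y : ZMod 2} (h : x + y = 1) (hy : y = 0) : x = 1 := by
  have : ∀ x y : ZMod 2, x + y = 1 → y = 0 → x = 1 := by decide
  exact this x y h hy

lemma key_core (n : ℕ) (σ : TriPartition n) (i j : Fin 3) (hij : i ≠ j)
    (b1 dx dy : ℤ) (a : Pt) (arc : List Pt)
    (ha : a ∈ σ.P i) (hb : ((b1, (0:ℤ)) : Pt) ∈ σ.P j)
    (hc : ((b1 + 1, (0:ℤ)) : Pt) ∈ σ.P i) (hd : ((dx, dy) : Pt) ∈ σ.P j)
    (harc_ne : arc ≠ [])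
    (harc_ch : List.Chain' TriLattice.Adj (((b1 + 1, (0:ℤ)) : Pt) :: arc))
    (harc_last : lst arc = a)
    (harc_out : ∀ x ∈ arc, x ∉ Tset n ∨ x = a)
    (harc_x : ∀ x ∈ arc, x.1 ≤ (n : ℤ))
    (hup : chT (((b1 + 1, (0:ℤ)) : Pt) :: arc) (b1, 0) (b1, 1) = 1)
    (hright1 : ∀ k : ℤ, b1 ≤ k → chT (((b1 + 1, (0:ℤ)) : Pt) :: arc) (k, 1) (k + 1, 1) = 0)
    (hrightd : ∀ k : ℤ, dx ≤ k → chT (((b1 + 1, (0:ℤ)) : Pt) :: arc) (k, dy) (k + 1, dy) = 0)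
    (hlpd : ∀ k : ℤ, dx ≤ k → ∀ u v : Pt, TriLattice.Adj u v → u ∈ Tset n → v ∈ Tset n →
      tE (k, dy) (k + 1, dy) u v = 0) :
    False := by
  have hPi := districts_subset σ i
  have hPj := districts_subset σ j
  have hdisj' : ∀ x, x ∈ σ.P i → x ∈ σ.P j → False := fun x h1 h2 =>
    Set.disjoint_left.mp (σ.disj i j hij) h1 h2
  obtain ⟨lp, hlpne, hlpch, hlpmem, hlphead, hlplast⟩ := exists_chain (σ.sc i).1 ha hc
  obtain ⟨lq, hlqne, hlqch, hlqmem, hlqhead, hlqlast⟩ := exists_chain (σ.sc j).1 hb hd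
  obtain ⟨A1, rest, rfl⟩ : ∃ A1 rest, arc = A1 :: rest := by
    cases arc with
    | nil => exact absurd rfl harc_ne
    | cons A1 rest => exact ⟨A1, rest, rfl⟩
  have hlpT : ∀ x ∈ lp, x ∈ Tset n := fun x hx => hPi (hlpmem x hx)
  -- the closed chain C
  have hsplitT : ∀ z z', chT (lp ++ A1 :: rest) z z' =
      chT lp z z' + chT (((b1 + 1, (0:ℤ)) : Pt) :: A1 :: rest) z z' := by
    intro z z'
    have h := chT_split lp hlpne A1 rest z z'
    rw [hlplast] at h
    exact h
  have hChead : (lp ++ A1 :: rest).headI = a := by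
    rw [headI_append _ _ hlpne, hlphead]
  have hClast : lst (lp ++ A1 :: rest) = a := by
    rw [lst_append_cons]; exact harc_last
  have hCclosed : (lp ++ A1 :: rest).headI = lst (lp ++ A1 :: rest) := by
    rw [hChead, hClast]
  have hCA1 : TriLattice.Adj ((b1 + 1, (0:ℤ)) : Pt) A1 ∧
      List.Chain' TriLattice.Adj (A1 :: rest) := List.isChain_cons_cons.mp harc_ch
  have hCch : List.Chain' TriLattice.Adj (lp ++ A1 :: rest) := by
    apply List.IsChain.append hlpch hCA1.2
    intro x hx y hy
    rw [getLast?_eq_lst lp hlpne] at hx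
    have hx' : lst lp = x := Option.mem_some_iff.mp hx
    have hy' : A1 = y := Option.mem_some_iff.mp hy
    subst hx'
    subst hy'
    rw [hlplast]
    exact hCA1.1
  have hCmem : ∀ x ∈ lp ++ A1 :: rest, x ∈ σ.P i ∨ x ∉ Tset n := by
    intro x hx
    rcases List.mem_append.mp hx with h1 | h1
    · exact Or.inl (hlpmem x h1)
    · rcases harc_out x h1 with h2 | h2
      · exact Or.inr h2
      · exact Or.inl (h2 ▸ ha)
  have hCx : ∀ x ∈ lp ++ A1 :: rest, x.1 ≤ (n : ℤ) := by
    intro x hx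
    rcases List.mem_append.mp hx with h1 | h1
    · exact (mem_Tset.mp (hlpT x h1)).2.1
    · exact harc_x x h1
  have hqdis : ∀ z ∈ lq, ∀ x ∈ lp ++ A1 :: rest, x ≠ z := by
    intro z hz x hx he
    have hzj := hlqmem z hz
    rcases hCmem x hx with h1 | h1
    · exact hdisj' x h1 (he ▸ hzj)
    · exact h1 (he ▸ hPj hzj)
  have hFbd : chF (lp ++ A1 :: rest) (b1, 0) = chF (lp ++ A1 :: rest) (dx, dy) := by
    have h := chF_eq_along _ hCclosed hCch lq hlqch hqdis
    rw [hlqhead, hlqlast] at h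
    exact h
  -- the vertical move from b
  have hlp_up : chT lp (b1, 0) (b1, 1) = 0 := by
    apply chT_eq_zero _ _ _ _ hlpch
    intro u v huv hu hv
    have hu' := mem_Tset.mp (hlpT u hu)
    have hv' := mem_Tset.mp (hlpT v hv)
    have hub : u ≠ ((b1, (0:ℤ)) : Pt) := fun he => hdisj' u (hlpmem u hu) (he ▸ hb)
    have hvb : v ≠ ((b1, (0:ℤ)) : Pt) := fun he => hdisj' v (hlpmem v hv) (he ▸ hb)
    refine tE_eq_zero ((adj_iff _ _).mpr (by dsimp only; omega)) huv
      (fun hc' => hub (Prod.ext_iff.mpr hc')) ?_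
      (fun hc' => hvb (Prod.ext_iff.mpr hc')) ?_
    · intro hc'
      have h2 : u.2 = 1 := hc'.2
      omega
    · intro hc'
      have h2 : v.2 = 1 := hc'.2
      omega
  have hb_step : chF (lp ++ A1 :: rest) (b1, 0) + chF (lp ++ A1 :: rest) (b1, 1) = 1 := by
    rw [chF_add_eq _ hCclosed, hsplitT, hlp_up, hup]
    decide
  -- rightward moves at height 1
  have hlp_r1 : ∀ k : ℤ, chT lp (k, 1) (k + 1, 1) = 0 := by
    intro k
    apply chT_eq_zero _ _ _ _ hlpch
    intro u v huv hu hv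
    exact tE_row k 1 u v (adj_x huv)
      (by have := (mem_Tset.mp (hlpT u hu)).2.2.2; omega)
      (by have := (mem_Tset.mp (hlpT v hv)).2.2.2; omega)
  have h1chain : ∀ k : ℤ, b1 ≤ k →
      chF (lp ++ A1 :: rest) (k, 1) = chF (lp ++ A1 :: rest) (k + 1, 1) := by
    intro k hk
    apply zmod2_eq_of_add_eq_zero
    rw [chF_add_eq _ hCclosed, hsplitT, hlp_r1 k, hright1 k hk, add_zero]
  have htrans1 : ∀ k : ℤ, b1 ≤ k →
      chF (lp ++ A1 :: rest) (b1, 1) = chF (lp ++ A1 :: rest) (k, 1) := by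
    refine Int.le_induction rfl ?_
    intro k hk ih
    exact ih.trans (h1chain k hk)
  have hvan1 : chF (lp ++ A1 :: rest) ((n : ℤ) + 1, 1) = 0 :=
    chF_vanish _ _ (fun v hv => by have := hCx v hv; dsimp only; omega)
  have hFb : chF (lp ++ A1 :: rest) (b1, 0) = 1 := by
    apply zmod2_first_of_sum hb_step
    have hb1n : b1 ≤ (n : ℤ) := (mem_Tset.mp (hPj hb)).2.1
    rw [htrans1 ((n : ℤ) + 1) (by omega)]
    exact hvan1
  -- rightward moves at height dy
  have hdchain : ∀ k : ℤ, dx ≤ k →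
      chF (lp ++ A1 :: rest) (k, dy) = chF (lp ++ A1 :: rest) (k + 1, dy) := by
    intro k hk
    apply zmod2_eq_of_add_eq_zero
    have hlp_rd : chT lp (k, dy) (k + 1, dy) = 0 := by
      apply chT_eq_zero _ _ _ _ hlpch
      intro u v huv hu hv
      exact hlpd k hk u v huv (hlpT u hu) (hlpT v hv)
    rw [chF_add_eq _ hCclosed, hsplitT, hlp_rd, hrightd k hk, add_zero]
  have htransd : ∀ k : ℤ, dx ≤ k →
      chF (lp ++ A1 :: rest) (dx, dy) = chF (lp ++ A1 :: rest) (k, dy) := by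
    refine Int.le_induction rfl ?_
    intro k hk ih
    exact ih.trans (hdchain k hk)
  have hvand : chF (lp ++ A1 :: rest) ((n : ℤ) + 1, dy) = 0 :=
    chF_vanish _ _ (fun v hv => by have := hCx v hv; dsimp only; omega)
  have hFd : chF (lp ++ A1 :: rest) (dx, dy) = 0 := by
    have hdxn : dx ≤ (n : ℤ) := (mem_Tset.mp (hPj hd)).2.1
    rw [htransd ((n : ℤ) + 1) (by omega)]
    exact hvand
  exact zmod2_contra hFbd hFb hFd


@[simp] lemma chT_one (u z z' : Pt) : chT [u] z z' = 0 := rfl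
@[simp] lemma chT_cons (u v : Pt) (l : List Pt) (z z' : Pt) :
    chT (u :: v :: l) z z' = tE z z' u v + chT (v :: l) z z' := rfl

lemma sE_up' (zx zy zy' : ℤ) (h : zy' = zy + 1) (w : Pt) : sE (zx, zy) (zx, zy') w = 0 := by
  subst h; exact sE_up zx zy w

lemma key (n : ℕ) (hn : 3 ≤ n) (σ : TriPartition n) (i j : Fin 3) (hij : i ≠ j)
    (b1 : ℤ) (hb11 : 1 ≤ b1) (hb1n : b1 ≤ (n : ℤ) - 1)
    (ha : (if b1 = 1 then (((2:ℤ), (-1:ℤ)) : Pt) else ((b1 - 1, 0) : Pt)) ∈ σ.P i)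
    (hb : ((b1, (0:ℤ)) : Pt) ∈ σ.P j)
    (hc : ((b1 + 1, (0:ℤ)) : Pt) ∈ σ.P i)
    (hd : (if b1 = (n : ℤ) - 1 then (((n:ℤ), (-1:ℤ)) : Pt) else ((b1 + 2, 0) : Pt)) ∈ σ.P j) :
    False := by
  have hnz : (3 : ℤ) ≤ (n : ℤ) := by exact_mod_cast hn
  by_cases h1 : b1 = 1
  · -- corner case: b = (1,0)
    subst h1
    rw [if_pos rfl] at ha
    rw [if_neg (by omega)] at hd
    have hd3 : (((3:ℤ), (0:ℤ)) : Pt) ∈ σ.P j := by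
      have he : (((1:ℤ) + 2, (0:ℤ)) : Pt) = ((3:ℤ), (0:ℤ)) := by norm_num
      rwa [he] at hd
    refine key_core n σ i j hij 1 3 0 ((2:ℤ), (-1:ℤ))
      [((1:ℤ), (1:ℤ)), (0, 1), (0, 0), (1, -1), (2, -1)] ha hb hc hd3
      (by simp) ?_ rfl ?_ ?_ (by decide) ?_ ?_ ?_
    · -- chain
      simp only [List.Chain', List.isChain_cons_cons, List.isChain_singleton, and_true]
      refine ⟨?_, ?_, ?_, ?_, ?_⟩ <;> (rw [adj_iff]; dsimp only; omega)
    · -- outside T or = a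
      intro x hx
      simp only [List.mem_cons, List.not_mem_nil, or_false] at hx
      rcases hx with rfl | rfl | rfl | rfl | rfl
      · exact Or.inl (by rw [mem_Tset]; dsimp only; omega)
      · exact Or.inl (by rw [mem_Tset]; dsimp only; omega)
      · exact Or.inl (by rw [mem_Tset]; dsimp only; omega)
      · exact Or.inl (by rw [mem_Tset]; dsimp only; omega)
      · exact Or.inr rfl
    · -- x-coordinates ≤ n
      intro x hx
      simp only [List.mem_cons, List.not_mem_nil, or_false] at hx
      rcases hx with rfl | rfl | rfl | rfl | rfl <;> (dsimp only; omega)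
    · -- right moves at height 1
      intro k hk
      have e1 : tE ((k, 1) : Pt) ((k + 1, 1) : Pt) ((1 + 1, 0) : Pt) ((1, 1) : Pt) = 0 := by
        unfold tE; rw [sE_right, sE_right]; unfold cE; dsimp only
        split_ifs <;> first | decide | omega
      have e2 : tE ((k, 1) : Pt) ((k + 1, 1) : Pt) ((1, 1) : Pt) ((0, 1) : Pt) = 0 := by
        unfold tE; rw [sE_right, sE_right]; unfold cE; dsimp only
        split_ifs <;> first | decide | omega
      have e3 : tE ((k, 1) : Pt) ((k + 1, 1) : Pt) ((0, 1) : Pt) ((0, 0) : Pt) = 0 := by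
        unfold tE; rw [sE_right, sE_right]; unfold cE; dsimp only
        split_ifs <;> first | decide | omega
      have e4 : tE ((k, 1) : Pt) ((k + 1, 1) : Pt) ((0, 0) : Pt) ((1, -1) : Pt) = 0 := by
        unfold tE; rw [sE_right, sE_right]; unfold cE; dsimp only
        split_ifs <;> first | decide | omega
      have e5 : tE ((k, 1) : Pt) ((k + 1, 1) : Pt) ((1, -1) : Pt) ((2, -1) : Pt) = 0 := by
        unfold tE; rw [sE_right, sE_right]; unfold cE; dsimp only
        split_ifs <;> first | decide | omega
      simp only [chT_cons, chT_one]
      rw [e1, e2, e3, e4, e5]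
      decide
    · -- right moves at height 0 from x = 3
      intro k hk
      have e1 : tE ((k, 0) : Pt) ((k + 1, 0) : Pt) ((1 + 1, 0) : Pt) ((1, 1) : Pt) = 0 := by
        unfold tE; rw [sE_right, sE_right]; unfold cE; dsimp only
        split_ifs <;> first | decide | omega
      have e2 : tE ((k, 0) : Pt) ((k + 1, 0) : Pt) ((1, 1) : Pt) ((0, 1) : Pt) = 0 := by
        unfold tE; rw [sE_right, sE_right]; unfold cE; dsimp only
        split_ifs <;> first | decide | omega
      have e3 : tE ((k, 0) : Pt) ((k + 1, 0) : Pt) ((0, 1) : Pt) ((0, 0) : Pt) = 0 := by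
        unfold tE; rw [sE_right, sE_right]; unfold cE; dsimp only
        split_ifs <;> first | decide | omega
      have e4 : tE ((k, 0) : Pt) ((k + 1, 0) : Pt) ((0, 0) : Pt) ((1, -1) : Pt) = 0 := by
        unfold tE; rw [sE_right, sE_right]; unfold cE; dsimp only
        split_ifs <;> first | decide | omega
      have e5 : tE ((k, 0) : Pt) ((k + 1, 0) : Pt) ((1, -1) : Pt) ((2, -1) : Pt) = 0 := by
        unfold tE; rw [sE_right, sE_right]; unfold cE; dsimp only
        split_ifs <;> first | decide | omega
      simp only [chT_cons, chT_one]
      rw [e1, e2, e3, e4, e5]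
      decide
    · -- p-edges during d-moves
      intro k hk u v huv hu hv
      exact tE_row k 0 u v (adj_x huv)
        (by have := (mem_Tset.mp hu).2.2.2; omega)
        (by have := (mem_Tset.mp hv).2.2.2; omega)
  · -- generic arc [(b1,1),(b1-1,1),(b1-1,0)]
    rw [if_neg h1] at ha
    have harc_ch : List.Chain' TriLattice.Adj
        [((b1 + 1, (0:ℤ)) : Pt), (b1, 1), (b1 - 1, 1), (b1 - 1, 0)] := by
      simp only [List.Chain', List.isChain_cons_cons, List.isChain_singleton, and_true]
      refine ⟨?_, ?_, ?_⟩ <;> (rw [adj_iff]; dsimp only; omega)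
    have harc_out : ∀ x ∈ [((b1, (1:ℤ)) : Pt), (b1 - 1, 1), (b1 - 1, 0)],
        x ∉ Tset n ∨ x = ((b1 - 1, (0:ℤ)) : Pt) := by
      intro x hx
      simp only [List.mem_cons, List.not_mem_nil, or_false] at hx
      rcases hx with rfl | rfl | rfl
      · exact Or.inl (by rw [mem_Tset]; dsimp only; omega)
      · exact Or.inl (by rw [mem_Tset]; dsimp only; omega)
      · exact Or.inr rfl
    have harc_x : ∀ x ∈ [((b1, (1:ℤ)) : Pt), (b1 - 1, 1), (b1 - 1, 0)], x.1 ≤ (n:ℤ) := by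
      intro x hx
      simp only [List.mem_cons, List.not_mem_nil, or_false] at hx
      rcases hx with rfl | rfl | rfl <;> (dsimp only; omega)
    have hsup : ∀ w : Pt, sE ((b1, (0:ℤ)) : Pt) ((b1, (1:ℤ)) : Pt) w = 0 := fun w =>
      sE_up' b1 0 1 (by norm_num) w
    have hup : chT [((b1 + 1, (0:ℤ)) : Pt), (b1, 1), (b1 - 1, 1), (b1 - 1, 0)]
        ((b1, 0) : Pt) ((b1, 1) : Pt) = 1 := by
      have e1 : tE ((b1, 0) : Pt) ((b1, 1) : Pt) ((b1 + 1, 0) : Pt) ((b1, 1) : Pt) = 1 := by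
        unfold tE; rw [hsup, hsup]; unfold cE; dsimp only
        split_ifs <;> first | decide | omega
      have e2 : tE ((b1, 0) : Pt) ((b1, 1) : Pt) ((b1, 1) : Pt) ((b1 - 1, 1) : Pt) = 0 := by
        unfold tE; rw [hsup, hsup]; unfold cE; dsimp only
        split_ifs <;> first | decide | omega
      have e3 : tE ((b1, 0) : Pt) ((b1, 1) : Pt) ((b1 - 1, 1) : Pt) ((b1 - 1, 0) : Pt) = 0 := by
        unfold tE; rw [hsup, hsup]; unfold cE; dsimp only
        split_ifs <;> first | decide | omega
      simp only [chT_cons, chT_one]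
      rw [e1, e2, e3]
      decide
    have hright1 : ∀ k : ℤ, b1 ≤ k →
        chT [((b1 + 1, (0:ℤ)) : Pt), (b1, 1), (b1 - 1, 1), (b1 - 1, 0)]
          ((k, 1) : Pt) ((k + 1, 1) : Pt) = 0 := by
      intro k hk
      have e1 : tE ((k, 1) : Pt) ((k + 1, 1) : Pt) ((b1 + 1, 0) : Pt) ((b1, 1) : Pt) = 0 := by
        unfold tE; rw [sE_right, sE_right]; unfold cE; dsimp only
        split_ifs <;> first | decide | omega
      have e2 : tE ((k, 1) : Pt) ((k + 1, 1) : Pt) ((b1, 1) : Pt) ((b1 - 1, 1) : Pt) = 0 := by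
        unfold tE; rw [sE_right, sE_right]; unfold cE; dsimp only
        split_ifs <;> first | decide | omega
      have e3 : tE ((k, 1) : Pt) ((k + 1, 1) : Pt) ((b1 - 1, 1) : Pt) ((b1 - 1, 0) : Pt) = 0 := by
        unfold tE; rw [sE_right, sE_right]; unfold cE; dsimp only
        split_ifs <;> first | decide | omega
      simp only [chT_cons, chT_one]
      rw [e1, e2, e3]
      decide
    by_cases h2 : b1 = (n : ℤ) - 1
    · -- d = (n, -1)
      rw [if_pos h2] at hd
      refine key_core n σ i j hij b1 (n : ℤ) (-1) ((b1 - 1, (0:ℤ)) : Pt)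
        [((b1, (1:ℤ)) : Pt), (b1 - 1, 1), (b1 - 1, 0)] ha hb hc hd
        (by simp) harc_ch rfl harc_out harc_x hup hright1 ?_ ?_
      · intro k hk
        have e1 := tE_far k (-1) ((b1 + 1, (0:ℤ)) : Pt) ((b1, 1) : Pt)
          (by dsimp only; omega) (by dsimp only; omega)
        have e2 := tE_far k (-1) ((b1, (1:ℤ)) : Pt) ((b1 - 1, 1) : Pt)
          (by dsimp only; omega) (by dsimp only; omega)
        have e3 := tE_far k (-1) ((b1 - 1, (1:ℤ)) : Pt) ((b1 - 1, 0) : Pt)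
          (by dsimp only; omega) (by dsimp only; omega)
        simp only [chT_cons, chT_one]
        rw [e1, e2, e3]
        decide
      · intro k hk u v huv hu hv
        exact tE_far k (-1) u v
          (by have := (mem_Tset.mp hu).2.1; omega)
          (by have := (mem_Tset.mp hv).2.1; omega)
    · -- d = (b1 + 2, 0)
      rw [if_neg h2] at hd
      refine key_core n σ i j hij b1 (b1 + 2) 0 ((b1 - 1, (0:ℤ)) : Pt)
        [((b1, (1:ℤ)) : Pt), (b1 - 1, 1), (b1 - 1, 0)] ha hb hc hd
        (by simp) harc_ch rfl harc_out harc_x hup hright1 ?_ ?_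
      · intro k hk
        have e1 : tE ((k, 0) : Pt) ((k + 1, 0) : Pt) ((b1 + 1, 0) : Pt) ((b1, 1) : Pt) = 0 := by
          unfold tE; rw [sE_right, sE_right]; unfold cE; dsimp only
          split_ifs <;> first | decide | omega
        have e2 : tE ((k, 0) : Pt) ((k + 1, 0) : Pt) ((b1, 1) : Pt) ((b1 - 1, 1) : Pt) = 0 := by
          unfold tE; rw [sE_right, sE_right]; unfold cE; dsimp only
          split_ifs <;> first | decide | omega
        have e3 : tE ((k, 0) : Pt) ((k + 1, 0) : Pt) ((b1 - 1, 1) : Pt) ((b1 - 1, 0) : Pt) = 0 := by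
          unfold tE; rw [sE_right, sE_right]; unfold cE; dsimp only
          split_ifs <;> first | decide | omega
        simp only [chT_cons, chT_one]
        rw [e1, e2, e3]
        decide
      · intro k hk u v huv hu hv
        exact tE_row k 0 u v (adj_x huv)
          (by have := (mem_Tset.mp hu).2.2.2; omega)
          (by have := (mem_Tset.mp hv).2.2.2; omega)


/-! ### Rotation of the triangle by 120 degrees. -/

def rotPt (n : ℕ) (p : Pt) : Pt := (p.2 + n, 1 - p.1 - p.2)

def rotInv (n : ℕ) (p : Pt) : Pt := ((n : ℤ) + 1 - p.1 - p.2, p.1 - n)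

lemma rot_left_inv (n : ℕ) (p : Pt) : rotInv n (rotPt n p) = p := by
  unfold rotPt rotInv
  rw [Prod.mk.injEq]
  dsimp only
  constructor <;> ring

lemma rot_right_inv (n : ℕ) (p : Pt) : rotPt n (rotInv n p) = p := by
  unfold rotPt rotInv
  rw [Prod.mk.injEq]
  dsimp only
  constructor <;> ring

lemma rot_bijective (n : ℕ) : Function.Bijective (rotPt n) :=
  Function.bijective_iff_has_inverse.mpr ⟨rotInv n, rot_left_inv n, rot_right_inv n⟩

lemma rot_adj (n : ℕ) {u v : Pt} :
    TriLattice.Adj (rotPt n u) (rotPt n v) ↔ TriLattice.Adj u v := by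
  rw [adj_iff, adj_iff]
  unfold rotPt
  dsimp only
  omega

lemma rot_mem_Tset (n : ℕ) {p : Pt} : rotPt n p ∈ Tset n ↔ p ∈ Tset n := by
  rw [mem_Tset, mem_Tset]
  unfold rotPt
  dsimp only
  omega

lemma rot_image_Tset (n : ℕ) : rotPt n '' Tset n = Tset n := by
  ext x
  constructor
  · rintro ⟨p, hp, rfl⟩
    exact (rot_mem_Tset n).mpr hp
  · intro hx
    refine ⟨rotInv n x, ?_, rot_right_inv n x⟩
    rw [← rot_mem_Tset n, rot_right_inv n x]
    exact hx

lemma connSet_rot (n : ℕ) {S : Set Pt} (h : ConnSet S) : ConnSet (rotPt n '' S) := by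
  refine SimpleGraph.Connected.map
    ⟨fun x => ⟨rotPt n x.1, ⟨x.1, x.2, rfl⟩⟩, ?_⟩ ?_ h
  · intro a b hab
    have : TriLattice.Adj (a : Pt) (b : Pt) := hab
    exact (rot_adj n).mpr this
  · rintro ⟨y, hy⟩
    obtain ⟨x, hx, rfl⟩ := hy
    exact ⟨⟨x, hx⟩, rfl⟩

/-- The rotation of a partition. -/
def rotP (n : ℕ) (σ : TriPartition n) : TriPartition n where
  P := fun k => rotPt n '' σ.P k
  disj := fun i j h =>
    Set.disjoint_image_of_injective (rot_bijective n).injective (σ.disj i j h)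
  cover := by rw [← Set.image_iUnion, σ.cover, rot_image_Tset]
  sc := fun k => by
    refine ⟨connSet_rot n (σ.sc k).1, ?_⟩
    rw [← Set.image_compl_eq (rot_bijective n)]
    exact connSet_rot n (σ.sc k).2

lemma bdCycleFun_eval (n : ℕ) (t : ℤ) :
    bdCycleFun n t = if t % (3 * ((n : ℤ) - 1)) < (n : ℤ) - 1
      then (1 + t % (3 * ((n : ℤ) - 1)), 0)
      else if t % (3 * ((n : ℤ) - 1)) < 2 * ((n : ℤ) - 1)
        then ((n : ℤ), ((n : ℤ) - 1) - t % (3 * ((n : ℤ) - 1)))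
        else (3 * ((n : ℤ) - 1) + 1 - t % (3 * ((n : ℤ) - 1)),
          1 - (3 * ((n : ℤ) - 1) + 1 - t % (3 * ((n : ℤ) - 1)))) := rfl

lemma emod_compute (r m s w v q : ℤ) (hr : r % m = s) (hv : s + w = v + m * q)
    (h1 : 0 ≤ v) (h2 : v < m) : (r + w) % m = v := by
  have hdecomp := Int.mul_ediv_add_emod r m
  rw [hr] at hdecomp
  have he : r + w = v + m * (r / m + q) := by linear_combination hv - hdecomp
  rw [he, Int.add_mul_emod_self_left]
  exact Int.emod_eq_of_lt h1 h2

/-- Equivariance of the boundary parametrization under rotation. -/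
lemma rot_bd (n : ℕ) (hn : 2 ≤ n) (u : ℤ) :
    rotPt n (bdCycleFun n u) = bdCycleFun n (u + ((n : ℤ) - 1)) := by
  have hnz : (2 : ℤ) ≤ (n : ℤ) := by exact_mod_cast hn
  have h1 : 0 ≤ u % (3 * ((n : ℤ) - 1)) := Int.emod_nonneg u (by omega)
  have h2 : u % (3 * ((n : ℤ) - 1)) < 3 * ((n : ℤ) - 1) :=
    Int.emod_lt_of_pos u (by omega)
  by_cases hcs : u % (3 * ((n : ℤ) - 1)) + ((n : ℤ) - 1) < 3 * ((n : ℤ) - 1)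
  · have hkey : (u + ((n : ℤ) - 1)) % (3 * ((n : ℤ) - 1)) =
        u % (3 * ((n : ℤ) - 1)) + ((n : ℤ) - 1) :=
      emod_compute u _ _ _ _ 0 rfl (by ring) (by omega) hcs
    rw [bdCycleFun_eval, bdCycleFun_eval, hkey]
    split_ifs <;> (unfold rotPt; dsimp only; rw [Prod.mk.injEq]; constructor <;> omega)
  · have hkey : (u + ((n : ℤ) - 1)) % (3 * ((n : ℤ) - 1)) =
        u % (3 * ((n : ℤ) - 1)) + ((n : ℤ) - 1) - 3 * ((n : ℤ) - 1) :=
      emod_compute u _ _ _ _ 1 rfl (by ring) (by omega) (by omega)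
    rw [bdCycleFun_eval, bdCycleFun_eval, hkey]
    split_ifs <;> (unfold rotPt; dsimp only; rw [Prod.mk.injEq]; constructor <;> omega)

lemma rot_mem_district (n : ℕ) (hn : 2 ≤ n) (σ : TriPartition n) (k : Fin 3) (u : ℤ)
    (h : bdCycleFun n u ∈ σ.P k) :
    bdCycleFun n (u + ((n : ℤ) - 1)) ∈ (rotP n σ).P k := by
  rw [← rot_bd n hn u]
  exact ⟨_, h, rfl⟩

/-- The final reduction step: when `b` sits on the top row. -/
lemma final (n : ℕ) (hn : 3 ≤ n) (σ : TriPartition n) (i j : Fin 3) (hij : i ≠ j)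
    (r s : ℤ) (hs : r % (3 * ((n : ℤ) - 1)) = s) (hs0 : 0 ≤ s) (hs1 : s ≤ (n : ℤ) - 2)
    (ha : bdCycleFun n (r - 1) ∈ σ.P i) (hb : bdCycleFun n r ∈ σ.P j)
    (hc : bdCycleFun n (r + 1) ∈ σ.P i) (hd : bdCycleFun n (r + 2) ∈ σ.P j) : False := by
  have hnz : (3 : ℤ) ≤ (n : ℤ) := by exact_mod_cast hn
  have hb' : bdCycleFun n r = ((1 + s, (0 : ℤ)) : Pt) := by
    rw [bdCycleFun_eval, hs]
    split_ifs <;> (rw [Prod.mk.injEq]; constructor <;> omega)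
  have hc' : bdCycleFun n (r + 1) = ((1 + s + 1, (0 : ℤ)) : Pt) := by
    have hk : (r + 1) % (3 * ((n : ℤ) - 1)) = s + 1 :=
      emod_compute r _ s 1 _ 0 hs (by ring) (by omega) (by omega)
    rw [bdCycleFun_eval, hk]
    split_ifs <;> (rw [Prod.mk.injEq]; constructor <;> omega)
  have hd' : bdCycleFun n (r + 2) =
      (if 1 + s = (n : ℤ) - 1 then (((n : ℤ), (-1 : ℤ)) : Pt) else ((1 + s + 2, 0) : Pt)) := by
    have hk : (r + 2) % (3 * ((n : ℤ) - 1)) = s + 2 :=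
      emod_compute r _ s 2 _ 0 hs (by ring) (by omega) (by omega)
    rw [bdCycleFun_eval, hk]
    split_ifs <;> (rw [Prod.mk.injEq]; constructor <;> omega)
  have ha' : bdCycleFun n (r - 1) =
      (if 1 + s = 1 then (((2 : ℤ), (-1 : ℤ)) : Pt) else ((1 + s - 1, 0) : Pt)) := by
    have he : r - 1 = r + (-1 : ℤ) := by ring
    by_cases hs00 : s = 0
    · have hk : (r - 1) % (3 * ((n : ℤ) - 1)) = s - 1 + 3 * ((n : ℤ) - 1) := by
        rw [he]
        exact emod_compute r _ s (-1) _ (-1) hs (by ring) (by omega) (by omega)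
      rw [bdCycleFun_eval, hk]
      split_ifs <;> (rw [Prod.mk.injEq]; constructor <;> omega)
    · have hk : (r - 1) % (3 * ((n : ℤ) - 1)) = s - 1 := by
        rw [he]
        exact emod_compute r _ s (-1) _ 0 hs (by ring) (by omega) (by omega)
      rw [bdCycleFun_eval, hk]
      split_ifs <;> (rw [Prod.mk.injEq]; constructor <;> omega)
  rw [ha'] at ha
  rw [hb'] at hb
  rw [hc'] at hc
  rw [hd'] at hd
  exact key n hn σ i j hij (1 + s) (by omega) (by omega) ha hb hc hd

/-- Lemma 4.1: for four consecutive vertices `a, b, c, d` along the boundary cycle of `T`,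
it is impossible that `a, c ∈ P_i` and `b, d ∈ P_j` with `i ≠ j`. -/
theorem no_boundary_alternation (n : ℕ) (σ : TriPartition n) (i j : Fin 3) (hij : i ≠ j)
    (t : ℤ)
    (ha : bdCycleFun n t ∈ σ.P i) (hb : bdCycleFun n (t + 1) ∈ σ.P j)
    (hc : bdCycleFun n (t + 2) ∈ σ.P i) (hd : bdCycleFun n (t + 3) ∈ σ.P j) :
    False := by
  have hdisj' : ∀ x, x ∈ σ.P i → x ∈ σ.P j → False := fun x h1 h2 =>
    Set.disjoint_left.mp (σ.disj i j hij) h1 h2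
  by_cases hn3 : 3 ≤ n
  · -- main case
    have hnz : (3 : ℤ) ≤ (n : ℤ) := by exact_mod_cast hn3
    have hm0 : (0 : ℤ) < 3 * ((n : ℤ) - 1) := by omega
    have h1 : 0 ≤ (t + 1) % (3 * ((n : ℤ) - 1)) := Int.emod_nonneg _ (by omega)
    have h2 : (t + 1) % (3 * ((n : ℤ) - 1)) < 3 * ((n : ℤ) - 1) :=
      Int.emod_lt_of_pos _ hm0
    have hrot := rot_mem_district n (by omega) σ
    have hrot2 := rot_mem_district n (by omega) (rotP n σ)
    by_cases hA : (t + 1) % (3 * ((n : ℤ) - 1)) < (n : ℤ) - 1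
    · refine final n hn3 σ i j hij (t + 1) ((t + 1) % (3 * ((n : ℤ) - 1))) rfl h1
        (by omega) ?_ ?_ ?_ ?_
      · rw [show t + 1 - 1 = t by ring]; exact ha
      · exact hb
      · rw [show t + 1 + 1 = t + 2 by ring]; exact hc
      · rw [show t + 1 + 2 = t + 3 by ring]; exact hd
    · by_cases hB : (t + 1) % (3 * ((n : ℤ) - 1)) < 2 * ((n : ℤ) - 1)
      · -- rotate twice
        set r : ℤ := t + 1 + ((n : ℤ) - 1) + ((n : ℤ) - 1) with hr_def
        have hs : r % (3 * ((n : ℤ) - 1)) =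
            (t + 1) % (3 * ((n : ℤ) - 1)) - ((n : ℤ) - 1) := by
          have he : r = (t + 1) + (((n : ℤ) - 1) + ((n : ℤ) - 1)) := by
            rw [hr_def]; ring
          rw [he]
          exact emod_compute (t + 1) _ _ _ _ 1 rfl (by ring) (by omega) (by omega)
        refine final n hn3 (rotP n (rotP n σ)) i j hij r _ hs (by omega) (by omega)
          ?_ ?_ ?_ ?_
        · have h' := hrot2 i _ (hrot i t ha)
          rw [show t + ((n : ℤ) - 1) + ((n : ℤ) - 1) = r - 1 by rw [hr_def]; try ring] at h'
          exact h'
        · have h' := hrot2 j _ (hrot j (t + 1) hb)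
          rw [show t + 1 + ((n : ℤ) - 1) + ((n : ℤ) - 1) = r by rw [hr_def]; try ring] at h'
          exact h'
        · have h' := hrot2 i _ (hrot i (t + 2) hc)
          rw [show t + 2 + ((n : ℤ) - 1) + ((n : ℤ) - 1) = r + 1 by rw [hr_def]; try ring] at h'
          exact h'
        · have h' := hrot2 j _ (hrot j (t + 3) hd)
          rw [show t + 3 + ((n : ℤ) - 1) + ((n : ℤ) - 1) = r + 2 by rw [hr_def]; try ring] at h'
          exact h'
      · -- rotate once
        set r : ℤ := t + 1 + ((n : ℤ) - 1) with hr_def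
        have hs : r % (3 * ((n : ℤ) - 1)) =
            (t + 1) % (3 * ((n : ℤ) - 1)) - 2 * ((n : ℤ) - 1) := by
          have he : r = (t + 1) + ((n : ℤ) - 1) := by rw [hr_def]
          rw [he]
          exact emod_compute (t + 1) _ _ _ _ 1 rfl (by ring) (by omega) (by omega)
        refine final n hn3 (rotP n σ) i j hij r _ hs (by omega) (by omega) ?_ ?_ ?_ ?_
        · have h' := hrot i t ha
          rw [show t + ((n : ℤ) - 1) = r - 1 by rw [hr_def]; try ring] at h'
          exact h'
        · exact hrot j (t + 1) hb
        · have h' := hrot i (t + 2) hc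
          rw [show t + 2 + ((n : ℤ) - 1) = r + 1 by rw [hr_def]; try ring] at h'
          exact h'
        · have h' := hrot j (t + 3) hd
          rw [show t + 3 + ((n : ℤ) - 1) = r + 2 by rw [hr_def]; try ring] at h'
          exact h'
  · -- degenerate cases n ≤ 2
    have hn2 : n = 0 ∨ n = 1 ∨ n = 2 := by omega
    have hPi := districts_subset σ i
    have hPj := districts_subset σ j
    rcases hn2 with rfl | rfl | rfl
    · -- n = 0 : Tset is empty
      have := mem_Tset.mp (hPi ha)
      omega
    · -- n = 1 : Tset = {(1,0)}
      have h1 := mem_Tset.mp (hPi ha)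
      have h2 := mem_Tset.mp (hPj hb)
      have e1 : bdCycleFun 1 t = ((1 : ℤ), (0 : ℤ)) := by
        rw [Prod.ext_iff]
        constructor <;> (dsimp only; omega)
      have e2 : bdCycleFun 1 (t + 1) = ((1 : ℤ), (0 : ℤ)) := by
        rw [Prod.ext_iff]
        constructor <;> (dsimp only; omega)
      rw [e1] at ha
      rw [e2] at hb
      exact hdisj' _ ha hb
    · -- n = 2 : the boundary cycle has period 3, so a = d
      have hper : bdCycleFun 2 (t + 3) = bdCycleFun 2 t := by
        rw [bdCycleFun_eval, bdCycleFun_eval]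
        have : (t + 3) % (3 * (((2 : ℕ) : ℤ) - 1)) = t % (3 * (((2 : ℕ) : ℤ) - 1)) := by
          omega
        rw [this]
      rw [hper] at hd
      exact hdisj' _ ha hd

end Redistrict
end
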